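/- Let n be a positive integer and let σ, τ ∈ NC(n). The following two statements are equivalent: (1) there exists π ∈ NC(n) such that σ ≪ π and τ ≪ K(π); (2) τ ≤ K(σ) and the associated permutations satisfy P_σ⁻¹(1) = P_τ(n). Moreover, when (1) and (2) hold, the partition π with the properties stated in (1) is uniquely determined. -/

import Mathlib

open Finset

attribute [local instance] Classical.propDecidable

open scoped ComplexOrder

namespace BBP

/-- Partitions of `{1,…,m}` modeled as `Finpartition`s of `univ : Finset (Fin m)`. -/
abbrev FP (m : ℕ) := Finpartition (Finset.univ : Finset (Fin m))

noncomputable instance (m : ℕ) : Fintype (FP m) :=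
  Fintype.ofInjective (fun π : FP m => π.parts) fun a b h => by
    cases a; cases b; simpa using h

/-- `x` is the minimum of the set `C`. -/
def IsMinOf {m : ℕ} (x : Fin m) (C : Finset (Fin m)) : Prop :=
  x ∈ C ∧ ∀ y ∈ C, x ≤ y

/-- `x` is the maximum of the set `C`. -/
def IsMaxOf {m : ℕ} (x : Fin m) (C : Finset (Fin m)) : Prop :=
  x ∈ C ∧ ∀ y ∈ C, y ≤ x

/-- `a` and `b` lie in one block of `π`. -/
def SameBlock {m : ℕ} (π : FP m) (a b : Fin m) : Prop :=
  ∃ B ∈ π.parts, a ∈ B ∧ b ∈ B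

/-- `π` is non-crossing: if `i<j<k<l`, `i,k` in one block and `j,l` in one block,
then all of them are in one block. -/
def IsNC {m : ℕ} (π : FP m) : Prop :=
  ∀ i j k l : Fin m, i < j → j < k → k < l →
    SameBlock π i k → SameBlock π j l → SameBlock π i j

/-- `A` embraces `B` : `min A ≤ min B` and `max B ≤ max A`. -/
def Embraces {m : ℕ} (A B : Finset (Fin m)) : Prop :=
  ∃ a₁ a₂ b₁ b₂ : Fin m, IsMinOf a₁ A ∧ IsMaxOf a₂ A ∧ IsMinOf b₁ B ∧ IsMaxOf b₂ B ∧
    a₁ ≤ b₁ ∧ b₂ ≤ a₂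

/-- `B` strictly embraces `A` : `min B < min A` and `max A < max B`. -/
def StrictlyEmbraces {m : ℕ} (B A : Finset (Fin m)) : Prop :=
  ∃ b₁ b₂ a₁ a₂ : Fin m, IsMinOf b₁ B ∧ IsMaxOf b₂ B ∧ IsMinOf a₁ A ∧ IsMaxOf a₂ A ∧
    b₁ < a₁ ∧ a₂ < b₂

/-- `A` is an outer block of `π`. -/
def IsOuter {m : ℕ} (π : FP m) (A : Finset (Fin m)) : Prop :=
  A ∈ π.parts ∧ ¬ ∃ B ∈ π.parts, StrictlyEmbraces B A

/-- The number `|π|_out` of outer blocks of `π`. -/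
noncomputable def numOuter {m : ℕ} (π : FP m) : ℕ :=
  (π.parts.filter fun A => IsOuter π A).card

/-- Reversed refinement order: every block of `ρ` is a union of blocks of `π`. -/
def Refines {m : ℕ} (π ρ : FP m) : Prop :=
  ∀ B ∈ π.parts, ∃ C ∈ ρ.parts, B ⊆ C

/-- The partial order `π ≪ ρ`. -/
def Ll {m : ℕ} (π ρ : FP m) : Prop :=
  Refines π ρ ∧
    ∀ C ∈ ρ.parts, ∃ B ∈ π.parts, ∃ x y : Fin m,
      IsMinOf x C ∧ IsMaxOf y C ∧ x ∈ B ∧ y ∈ B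

/-- The partition `1ₙ` of `{1,…,n+1}` with a single block. -/
noncomputable def fullPart (n : ℕ) : FP (n+1) :=
  Finpartition.indiscrete (by simpa using (Finset.univ_nonempty (α := Fin (n+1))).ne_empty)

/-- `π` is an interval partition. -/
def IsIntervalPartition {m : ℕ} (π : FP m) : Prop :=
  ∀ B ∈ π.parts, ∀ x ∈ B, ∀ z ∈ B, ∀ y : Fin m, x ≤ y → y ≤ z → y ∈ B

/-- `σ` is the permutation associated to `π` : on each block `{b₁ < ⋯ < b_q}` it is the
cycle `b₁ ↦ b₂ ↦ ⋯ ↦ b_q ↦ b₁`. -/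
def IsAssocPerm {m : ℕ} (π : FP m) (σ : Equiv.Perm (Fin m)) : Prop :=
  ∀ B ∈ π.parts, ∀ b ∈ B, σ b ∈ B ∧
    ((b < σ b ∧ ∀ x ∈ B, b < x → σ b ≤ x) ∨ (IsMaxOf b B ∧ IsMinOf (σ b) B))

/-- `κ` is the Kreweras complement of `π`, characterized by `P_κ = P_π⁻¹ ∘ P_{1ₙ}`,
where `P_{1ₙ}` is the cycle `1 ↦ 2 ↦ ⋯ ↦ n ↦ 1` (i.e. `finRotate`). -/
def IsKrewerasPair {m : ℕ} (π κ : FP m) : Prop :=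
  ∃ σπ σκ : Equiv.Perm (Fin m), IsAssocPerm π σπ ∧ IsAssocPerm κ σκ ∧
    σκ = σπ⁻¹ * finRotate m

/-- the element `2a-1` of `{1,…,2n}`, in `Fin (2n)` (0-indexed). -/
def oddEmb {n : ℕ} (a : Fin n) : Fin (2*n) := ⟨2*a.val, by have := a.isLt; omega⟩

/-- the element `2a` of `{1,…,2n}`, in `Fin (2n)` (0-indexed). -/
def evenEmb {n : ℕ} (a : Fin n) : Fin (2*n) := ⟨2*a.val + 1, by have := a.isLt; omega⟩

/-- `θ = π^(odd) ∪ ρ^(even)` : the blocks of `θ` are the sets `{2a-1 : a ∈ A}` for `A`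
a block of `π` and the sets `{2b : b ∈ B}` for `B` a block of `ρ`. -/
def IsOddEvenJoin {n : ℕ} (π ρ : FP n) (θ : FP (2*n)) : Prop :=
  θ.parts = π.parts.image (fun B => B.image oddEmb) ∪
    ρ.parts.image (fun B => B.image evenEmb)

/-- a block consisting of odd elements of `{1,…,2n}` (even 0-indexed values). -/
def OddBlock {m : ℕ} (B : Finset (Fin m)) : Prop := ∀ x ∈ B, x.val % 2 = 0

/-- a block consisting of even elements of `{1,…,2n}` (odd 0-indexed values). -/
def EvenBlock {m : ℕ} (B : Finset (Fin m)) : Prop := ∀ x ∈ B, x.val % 2 = 1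

/-- every block of `θ` is contained in the odds or in the evens. -/
def ParityPreserving {m : ℕ} (θ : FP m) : Prop :=
  ∀ B ∈ θ.parts, OddBlock B ∨ EvenBlock B

def OppositeParity {m : ℕ} (A B : Finset (Fin m)) : Prop :=
  (OddBlock A ∧ EvenBlock B) ∨ (EvenBlock A ∧ OddBlock B)

def SameParity {m : ℕ} (A B : Finset (Fin m)) : Prop :=
  (OddBlock A ∧ OddBlock B) ∨ (EvenBlock A ∧ EvenBlock B)

/-- `P = Parent_θ(A)` : the unique block `P ≠ A` of `θ` embracing `A` such that every
block `A' ≠ A` of `θ` embracing `A` also embraces `P`. -/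
def IsParent {m : ℕ} (θ : FP m) (A P : Finset (Fin m)) : Prop :=
  P ∈ θ.parts ∧ P ≠ A ∧ Embraces P A ∧
    ∀ A' ∈ θ.parts, A' ≠ A → Embraces A' A → Embraces A' P

/-- `θ` has exactly two outer blocks. -/
def ExactlyTwoOuterBlocks {m : ℕ} (θ : FP m) : Prop :=
  ∃ M ∈ θ.parts, ∃ N ∈ θ.parts, M ≠ N ∧ IsOuter θ M ∧ IsOuter θ N ∧
    ∀ A ∈ θ.parts, IsOuter θ A → A = M ∨ A = N

/-- A series in `ℂ₀⟨⟨z₁,…,z_k⟩⟩`, given by its family of coefficients: `f n w` is the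
coefficient of `z_{w 0} z_{w 1} ⋯ z_{w n}` (a word of length `n+1 ≥ 1`). -/
abbrev NCSeries (k : ℕ) := (n : ℕ) → (Fin (n+1) → Fin k) → ℂ

/-- The coefficient `Cf_{w|B}(f)` of the restriction of the word `w` to the set `B`,
listing the elements of `B` in increasing order.  (Equals `1` for `B = ∅`.) -/
noncomputable def partCoeff {k m : ℕ} (f : NCSeries k) (w : Fin (m+1) → Fin k)
    (B : Finset (Fin (m+1))) : ℂ :=
  if h : B.Nonempty then
    f (B.card - 1) (fun j =>
      w ((B.orderIsoOfFin (Nat.succ_pred_eq_of_pos (Finset.card_pos.mpr h)).symm j).1))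
  else 1

/-- The generalized coefficient `Cf_{w;π}(f) = ∏_{B block of π} Cf_{w|B}(f)`. -/
noncomputable def genCoeff {k m : ℕ} (f : NCSeries k) (w : Fin (m+1) → Fin k)
    (π : FP (m+1)) : ℂ :=
  ∏ B ∈ π.parts, partCoeff f w B

/-- Linear functionals on `ℂ⟨X₁,…,X_k⟩`. -/
abbrev Dist (k : ℕ) := FreeAlgebra ℂ (Fin k) →ₗ[ℂ] ℂ

/-- `μ ∈ D_alg(k)` : `μ` is normalized by `μ(1) = 1`. -/
def IsDalg {k : ℕ} (μ : Dist k) : Prop := μ 1 = 1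

/-- The moment series `M_μ`, with `(momentSeries μ) n w = μ (X_{w 0} ⋯ X_{w n})`. -/
noncomputable def momentSeries {k : ℕ} (μ : Dist k) : NCSeries k :=
  fun _ w => μ ((List.ofFn fun j => FreeAlgebra.ι ℂ (w j)).prod)

/-- `f = R_μ` : the moments of `μ` are obtained from `f` by summation over all
non-crossing partitions. -/
def IsRTransform {k : ℕ} (μ : Dist k) (f : NCSeries k) : Prop :=
  ∀ (n : ℕ) (w : Fin (n+1) → Fin k),
    momentSeries μ n w = ∑ π : FP (n+1), if IsNC π then genCoeff f w π else 0

/-- `g = η_μ` : the moments of `μ` are obtained from `g` by summation over all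
interval partitions. -/
def IsEtaSeries {k : ℕ} (μ : Dist k) (g : NCSeries k) : Prop :=
  ∀ (n : ℕ) (w : Fin (n+1) → Fin k),
    momentSeries μ n w = ∑ π : FP (n+1), if IsIntervalPartition π then genCoeff g w π else 0

/-- `μ ∈ D_c(k)` : `μ` is the joint distribution of a `k`-tuple of selfadjoint elements
with respect to a state on a unital C*-algebra. -/
def IsDc {k : ℕ} (μ : Dist k) : Prop :=
  IsDalg μ ∧
  ∃ (A : Type) (_ : NormedRing A) (_ : StarRing A) (_ : CStarRing A)
    (_ : NormedAlgebra ℂ A) (_ : StarModule ℂ A) (_ : CompleteSpace A)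
    (φ : A →ₗ[ℂ] ℂ) (x : Fin k → A),
      φ 1 = 1 ∧ (∀ a : A, 0 ≤ φ (star a * a)) ∧ (∀ i, IsSelfAdjoint (x i)) ∧
      ∀ (n : ℕ) (w : Fin (n+1) → Fin k),
        momentSeries μ n w = φ ((List.ofFn fun j => x (w j)).prod)

/-- convergence in moments. -/
def ConvInMoments {k : ℕ} (μseq : ℕ → Dist k) (μ : Dist k) : Prop :=
  ∀ P : FreeAlgebra ℂ (Fin k),
    Filter.Tendsto (fun N => μseq N P) Filter.atTop (nhds (μ P))

/-- coefficientwise convergence of series. -/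
def ConvCoeffwise {k : ℕ} (fseq : ℕ → NCSeries k) (f : NCSeries k) : Prop :=
  ∀ (n : ℕ) (w : Fin (n+1) → Fin k),
    Filter.Tendsto (fun N => fseq N n w) Filter.atTop (nhds (f n w))

/-- `ν` is the `p`-fold free additive convolution `μ ⊞ ⋯ ⊞ μ`, i.e. `R_ν = p · R_μ`. -/
def IsNFoldFree {k : ℕ} (p : ℕ) (μ ν : Dist k) : Prop :=
  ∃ f : NCSeries k, IsRTransform μ f ∧ IsRTransform ν (fun n w => (p : ℂ) * f n w)

/-- `ν` is the `p`-fold Boolean convolution `μ ⊎ ⋯ ⊎ μ`, i.e. `η_ν = p · η_μ`. -/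
def IsNFoldBool {k : ℕ} (p : ℕ) (μ ν : Dist k) : Prop :=
  ∃ g : NCSeries k, IsEtaSeries μ g ∧ IsEtaSeries ν (fun n w => (p : ℂ) * g n w)

/-- `ν = 𝔹(μ)` : the Boolean Bercovici–Pata bijection, `R_{𝔹(μ)} = η_μ`. -/
def IsBP {k : ℕ} (μ ν : Dist k) : Prop :=
  ∃ f : NCSeries k, IsEtaSeries μ f ∧ IsRTransform ν f

/-- `μ ∈ D_c(k)` is infinitely divisible with respect to `⊞`. -/
def IsInfDiv {k : ℕ} (μ : Dist k) : Prop :=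
  IsDc μ ∧ ∀ N : ℕ, 0 < N → ∃ ν : Dist k, IsDc ν ∧ IsNFoldFree N ν μ

/-- `g = Reta(f)`, i.e. there is `μ ∈ D_alg(k)` with `f = R_μ` and `g = η_μ`. -/
def RetaRel {k : ℕ} (f g : NCSeries k) : Prop :=
  ∃ μ : Dist k, IsDalg μ ∧ IsRTransform μ f ∧ IsEtaSeries μ g


/-! ### Auxiliary infrastructure for statement18 -/

section Aux
variable {n : ℕ}

/-- The block of `π` containing `x`. -/
noncomputable def blk (π : FP n) (x : Fin n) : Finset (Fin n) := π.part x

lemma blk_mem (π : FP n) (x : Fin n) : blk π x ∈ π.parts :=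
  π.part_mem.2 (mem_univ x)

lemma mem_blk (π : FP n) (x : Fin n) : x ∈ blk π x :=
  π.mem_part (mem_univ x)

lemma blk_eq_of_mem {π : FP n} {B : Finset (Fin n)} {x : Fin n}
    (hB : B ∈ π.parts) (hx : x ∈ B) : blk π x = B :=
  π.eq_of_mem_parts (blk_mem π x) hB (mem_blk π x) hx

lemma sb_iff {π : FP n} {x y : Fin n} : SameBlock π x y ↔ y ∈ blk π x := by
  constructor
  · rintro ⟨B, hB, hx, hy⟩; rwa [blk_eq_of_mem hB hx]
  · intro h; exact ⟨blk π x, blk_mem π x, mem_blk π x, h⟩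

lemma sb_refl (π : FP n) (x : Fin n) : SameBlock π x x :=
  ⟨blk π x, blk_mem π x, mem_blk π x, mem_blk π x⟩

lemma sb_symm {π : FP n} {x y : Fin n} (h : SameBlock π x y) : SameBlock π y x := by
  obtain ⟨B, hB, hx, hy⟩ := h; exact ⟨B, hB, hy, hx⟩

lemma sb_trans {π : FP n} {x y z : Fin n} (h : SameBlock π x y) (h' : SameBlock π y z) :
    SameBlock π x z := by
  obtain ⟨B, hB, hx, hy⟩ := h; obtain ⟨B', hB', hy', hz⟩ := h'
  exact ⟨B, hB, hx, (π.eq_of_mem_parts hB' hB hy' hy) ▸ hz⟩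

/-- minimum of a block. -/
lemma blk_nonempty {π : FP n} {B : Finset (Fin n)} (hB : B ∈ π.parts) : B.Nonempty :=
  π.nonempty_of_mem_parts hB

lemma isMinOf_min' {π : FP n} {B : Finset (Fin n)} (hB : B ∈ π.parts) :
    IsMinOf (B.min' (blk_nonempty hB)) B :=
  ⟨B.min'_mem _, fun y hy => B.min'_le y hy⟩

lemma isMaxOf_max' {π : FP n} {B : Finset (Fin n)} (hB : B ∈ π.parts) :
    IsMaxOf (B.max' (blk_nonempty hB)) B :=
  ⟨B.max'_mem _, fun y hy => B.le_max' y hy⟩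

lemma isMinOf_unique {B : Finset (Fin n)} {x y : Fin n} (hx : IsMinOf x B) (hy : IsMinOf y B) :
    x = y := le_antisymm (hx.2 y hy.1) (hy.2 x hx.1)

lemma isMaxOf_unique {B : Finset (Fin n)} {x y : Fin n} (hx : IsMaxOf x B) (hy : IsMaxOf y B) :
    x = y := le_antisymm (hy.2 x hx.1) (hx.2 y hy.1)

/-! ### Associated permutation lemmas -/

lemma ap_mem {π : FP n} {p : Equiv.Perm (Fin n)} (hp : IsAssocPerm π p) (x : Fin n) :
    p x ∈ blk π x :=
  (hp (blk π x) (blk_mem π x) x (mem_blk π x)).1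

lemma ap_sb {π : FP n} {p : Equiv.Perm (Fin n)} (hp : IsAssocPerm π p) (x : Fin n) :
    SameBlock π x (p x) := sb_iff.2 (ap_mem hp x)

/-- If `x` is the max of its block, `p x` is the min. -/
lemma ap_max {π : FP n} {p : Equiv.Perm (Fin n)} (hp : IsAssocPerm π p) {x : Fin n}
    (hx : IsMaxOf x (blk π x)) : IsMinOf (p x) (blk π x) := by
  rcases (hp (blk π x) (blk_mem π x) x (mem_blk π x)).2 with ⟨h1, _⟩ | ⟨_, h2⟩
  · exact absurd h1 (not_lt.2 (hx.2 _ (ap_mem hp x)))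
  · exact h2

/-- If `x` is not the max of its block, `p x` is the least element above `x`. -/
lemma ap_succ {π : FP n} {p : Equiv.Perm (Fin n)} (hp : IsAssocPerm π p) {x y : Fin n}
    (hy : y ∈ blk π x) (hxy : x < y) : x < p x ∧ p x ≤ y := by
  rcases (hp (blk π x) (blk_mem π x) x (mem_blk π x)).2 with ⟨h1, h2⟩ | ⟨h1, _⟩
  · exact ⟨h1, h2 y hy hxy⟩
  · exact absurd hxy (not_lt.2 (h1.2 y hy))

/-- characterization of `p x` when some element of the block is above `x`:
`p x` is in the block, above `x`, and minimal such. -/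
lemma ap_succ_eq {π : FP n} {p : Equiv.Perm (Fin n)} (hp : IsAssocPerm π p) {x y : Fin n}
    (hy : y ∈ blk π x) (hxy : x < y) (hmin : ∀ w ∈ blk π x, x < w → y ≤ w) : p x = y := by
  obtain ⟨h1, h2⟩ := ap_succ hp hy hxy
  exact le_antisymm h2 (hmin _ (ap_mem hp x) h1)

lemma ap_max_eq {π : FP n} {p : Equiv.Perm (Fin n)} (hp : IsAssocPerm π p) {x y : Fin n}
    (hx : IsMaxOf x (blk π x)) (hy : IsMinOf y (blk π x)) : p x = y :=
  isMinOf_unique (ap_max hp hx) hy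

/-- Uniqueness of the associated permutation. -/
lemma ap_unique {π : FP n} {p q : Equiv.Perm (Fin n)} (hp : IsAssocPerm π p)
    (hq : IsAssocPerm π q) : p = q := by
  ext x
  by_cases hx : IsMaxOf x (blk π x)
  · rw [show p x = (blk π x).min' ⟨x, mem_blk π x⟩ from
      isMinOf_unique (ap_max hp hx) (isMinOf_min' (blk_mem π x)),
      show q x = (blk π x).min' ⟨x, mem_blk π x⟩ from
      isMinOf_unique (ap_max hq hx) (isMinOf_min' (blk_mem π x))]
  · have : ∃ y ∈ blk π x, x < y := by
      by_contra hc
      push_neg at hc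
      exact hx ⟨mem_blk π x, fun y hy => hc y hy⟩
    obtain ⟨y, hy, hxy⟩ := this
    obtain ⟨hp1, hp2⟩ := ap_succ hp hy hxy
    obtain ⟨hq1, hq2⟩ := ap_succ hq hy hxy
    have h1 : q x ≤ p x := (ap_succ hq (ap_mem hp x) hp1).2
    have h2 : p x ≤ q x := (ap_succ hp (ap_mem hq x) hq1).2
    exact le_antisymm h2 h1

/-- `p⁻¹` at an element that is the min of its block. -/
lemma ap_inv_of_min {π : FP n} {p : Equiv.Perm (Fin n)} (hp : IsAssocPerm π p) {e : Fin n}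
    (he : IsMinOf e (blk π e)) : IsMaxOf (p⁻¹ e) (blk π e) := by
  set x := p⁻¹ e with hx
  have hpe : p x = e := by simp [hx]
  have hxB : x ∈ blk π e := by
    have := ap_mem hp x
    rw [hpe] at this
    have h2 : blk π e = blk π x := blk_eq_of_mem (blk_mem π x) this
    rw [h2]; exact mem_blk π x
  have hblk : blk π x = blk π e := blk_eq_of_mem (blk_mem π e) hxB
  by_contra hc
  have : ∃ y ∈ blk π e, x < y := by
    by_contra hc2; push_neg at hc2
    exact hc ⟨hxB, fun y hy => hc2 y hy⟩
  obtain ⟨y, hy, hxy⟩ := this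
  have := ap_succ hp (x := x) (y := y) (hblk ▸ hy) hxy
  rw [hpe] at this
  exact absurd (lt_of_lt_of_le this.1 (he.2 x hxB)) (lt_irrefl x)

/-- `p⁻¹` at an element that is not the min of its block: it is below `e`,
in the block, with nothing in between. -/
lemma ap_inv_of_not_min {π : FP n} {p : Equiv.Perm (Fin n)} (hp : IsAssocPerm π p) {e w : Fin n}
    (hw : w ∈ blk π e) (hwe : w < e) :
    p⁻¹ e ∈ blk π e ∧ p⁻¹ e < e ∧ ∀ y ∈ blk π e, p⁻¹ e < y → e ≤ y := by
  set x := p⁻¹ e with hx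
  have hpe : p x = e := by simp [hx]
  have hxB : x ∈ blk π e := by
    have := ap_mem hp x
    rw [hpe] at this
    have h2 : blk π e = blk π x := blk_eq_of_mem (blk_mem π x) this
    rw [h2]; exact mem_blk π x
  have hblk : blk π x = blk π e := blk_eq_of_mem (blk_mem π e) hxB
  rcases (hp (blk π e) (blk_mem π e) x hxB).2 with ⟨h1, h2⟩ | ⟨h1, h2⟩
  · rw [hpe] at h1 h2
    exact ⟨hxB, h1, h2⟩
  · rw [hpe] at h2
    exact absurd hwe (not_lt.2 (h2.2 w hw))

end Aux
section PartB
variable {n : ℕ}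

/-- Non-crossing: two blocks with crossing representatives coincide. -/
lemma nc_cross {ρ : FP n} (hρ : IsNC ρ) {B D : Finset (Fin n)} (hB : B ∈ ρ.parts)
    (hD : D ∈ ρ.parts) {i j k l : Fin n} (hij : i < j) (hjk : j < k) (hkl : k < l)
    (hiB : i ∈ B) (hkB : k ∈ B) (hjD : j ∈ D) (hlD : l ∈ D) : B = D := by
  obtain ⟨E, hE, hiE, hjE⟩ := hρ i j k l hij hjk hkl ⟨B, hB, hiB, hkB⟩ ⟨D, hD, hjD, hlD⟩
  rw [ρ.eq_of_mem_parts hB hE hiB hiE, ρ.eq_of_mem_parts hD hE hjD hjE]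

lemma ap_iterate_mem {π : FP n} {p : Equiv.Perm (Fin n)} (hp : IsAssocPerm π p)
    (x : Fin n) : ∀ k, p^[k] x ∈ blk π x := by
  intro k
  induction k with
  | zero => exact mem_blk π x
  | succ k ih =>
    rw [Function.iterate_succ_apply']
    have h1 := ap_mem hp (p^[k] x)
    rwa [blk_eq_of_mem (blk_mem π x) ih] at h1

lemma ap_reach_min {π : FP n} {p : Equiv.Perm (Fin n)} (hp : IsAssocPerm π p)
    {B : Finset (Fin n)} (hB : B ∈ π.parts) {m : Fin n} (hm : IsMinOf m B) :
    ∀ y ∈ B, ∃ k, p^[k] m = y := by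
  suffices H : ∀ N : ℕ, ∀ y ∈ B, y.val ≤ N → ∃ k, p^[k] m = y by
    intro y hy; exact H y.val y hy le_rfl
  intro N
  induction N with
  | zero =>
    intro y hy hv
    refine ⟨0, ?_⟩
    have : m ≤ y := hm.2 y hy
    have : m = y := le_antisymm this (by omega)
    simpa using this
  | succ N ih =>
    intro y hy hv
    by_cases hym : y = m
    · exact ⟨0, by simp [hym]⟩
    · have hmy : m < y := lt_of_le_of_ne (hm.2 y hy) (fun h => hym h.symm)
      have hSne : (B.filter (fun z => z < y)).Nonempty := ⟨m, by simp [hm.1, hmy]⟩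
      set y' := (B.filter (fun z => z < y)).max' hSne with hy'
      have hy'mem : y' ∈ B ∧ y' < y := by
        have h := (B.filter (fun z => z < y)).max'_mem hSne
        rw [Finset.mem_filter] at h
        exact ⟨h.1, h.2⟩
      have hy'max : ∀ z ∈ B, z < y → z ≤ y' := by
        intro z hz hzy
        exact Finset.le_max' _ z (by simp [hz, hzy])
      have hblk : blk π y' = B := blk_eq_of_mem hB hy'mem.1
      have hpy' : p y' = y := by
        apply ap_succ_eq hp (y := y) (hblk ▸ hy) hy'mem.2
        intro w hw hy'w
        rw [hblk] at hw
        by_contra hc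
        exact absurd (hy'max w hw (not_le.1 hc)) (not_le.2 hy'w)
      obtain ⟨k, hk⟩ := ih y' hy'mem.1 (by
        have := hy'mem.2
        rw [Fin.lt_def] at this
        omega)
      exact ⟨k + 1, by rw [Function.iterate_succ_apply', hk, hpy']⟩

/-- A partition is determined by its associated permutation. -/
lemma ap_part_det {π ρ : FP n} {p : Equiv.Perm (Fin n)} (hp : IsAssocPerm π p)
    (hq : IsAssocPerm ρ p) : π = ρ := by
  have key : ∀ (π₁ π₂ : FP n), IsAssocPerm π₁ p → IsAssocPerm π₂ p →
      ∀ B ∈ π₁.parts, B ∈ π₂.parts := by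
    intro π₁ π₂ hp1 hp2 B hB
    have hne := blk_nonempty hB
    set m := B.min' hne with hm
    have hmB : m ∈ B := B.min'_mem hne
    have hBblk : blk π₁ m = B := blk_eq_of_mem hB hmB
    set B₂ := blk π₂ m with hB₂
    have hsub : B ⊆ B₂ := by
      intro y hy
      obtain ⟨k, hk⟩ := ap_reach_min hp1 hB ⟨hmB, fun z hz => B.min'_le z hz⟩ y hy
      rw [← hk]; exact ap_iterate_mem hp2 m k
    have hsub2 : B₂ ⊆ B := by
      have hne2 : B₂.Nonempty := blk_nonempty (blk_mem π₂ m)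
      set m₂ := B₂.min' hne2 with hm₂
      have hm₂B₂ : m₂ ∈ B₂ := B₂.min'_mem hne2
      intro y hy
      obtain ⟨k, hk⟩ := ap_reach_min hp2 (blk_mem π₂ m)
        ⟨hm₂B₂, fun z hz => B₂.min'_le z hz⟩ y hy
      have h1 : p^[k] m₂ ∈ blk π₁ m₂ := ap_iterate_mem hp1 m₂ k
      have h2 : blk π₁ m₂ = B := by
        have hmB2 : m ∈ blk π₁ m₂ := by
          obtain ⟨k', hk'⟩ := ap_reach_min hp2 (blk_mem π₂ m)
            ⟨hm₂B₂, fun z hz => B₂.min'_le z hz⟩ m (mem_blk π₂ m)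
          rw [← hk']; exact ap_iterate_mem hp1 m₂ k'
        rw [π₁.eq_of_mem_parts (blk_mem π₁ m₂) hB hmB2 hmB]
      rw [← hk]; rw [h2] at h1; exact h1
    have : B = B₂ := Finset.Subset.antisymm hsub hsub2
    rw [this]; exact blk_mem π₂ m
  have h1 : π.parts = ρ.parts := by
    apply Finset.Subset.antisymm
    · intro B hB; exact key π ρ hp hq B hB
    · intro B hB; exact key ρ π hq hp B hB
  cases π; cases ρ
  simpa using h1

/-! ### The interval relation -/

/-- `Rel ρ x y` : the interval `(min x y, max x y]` is a union of blocks of `ρ`. -/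
def Rel (ρ : FP n) (x y : Fin n) : Prop :=
  ∀ B ∈ ρ.parts, ∀ a ∈ B, ∀ b ∈ B, ((a ≤ x ↔ a ≤ y) → (b ≤ x ↔ b ≤ y))

lemma rel_refl (ρ : FP n) (x : Fin n) : Rel ρ x x := by
  intro B hB a ha b hb h
  exact Iff.rfl

lemma rel_symm {ρ : FP n} {x y : Fin n} (h : Rel ρ x y) : Rel ρ y x := by
  intro B hB a ha b hb hab
  exact (h B hB a ha b hb hab.symm).symm

lemma rel_trans {ρ : FP n} {x y z : Fin n} (h1 : Rel ρ x y) (h2 : Rel ρ y z) :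
    Rel ρ x z := by
  intro B hB a ha b hb hab
  by_cases hxy : (a ≤ x ↔ a ≤ y)
  · have hyz : (a ≤ y ↔ a ≤ z) := by tauto
    have := h1 B hB a ha b hb hxy
    have := h2 B hB a ha b hb hyz
    tauto
  · have hb1 : ¬(b ≤ x ↔ b ≤ y) := fun hc => hxy (h1 B hB b hb a ha hc)
    have hyz : ¬(a ≤ y ↔ a ≤ z) := by tauto
    have hb2 : ¬(b ≤ y ↔ b ≤ z) := fun hc => hyz (h2 B hB b hb a ha hc)
    tauto

/-- From `Rel` : if `a` lies in `(x, y]` and `b` is in the same block, `b ∈ (x,y]`. -/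
lemma rel_mem_of {ρ : FP n} {x y : Fin n} (h : Rel ρ x y) (hxy : x ≤ y)
    {B : Finset (Fin n)} (hB : B ∈ ρ.parts) {a b : Fin n} (ha : a ∈ B) (hb : b ∈ B)
    (h1 : x < a) (h2 : a ≤ y) : x < b ∧ b ≤ y := by
  have key := h B hB b hb a ha
  have hna : ¬(a ≤ x ↔ a ≤ y) := by
    intro hc
    exact absurd (hc.2 h2) (not_le.2 h1)
  have : ¬(b ≤ x ↔ b ≤ y) := fun hc => hna (key hc)
  constructor
  · by_contra hc
    push_neg at hc
    exact this ⟨fun h => le_trans hc hxy, fun _ => hc⟩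
  · by_contra hc
    push_neg at hc
    exact this ⟨fun h => absurd (le_trans h hxy) (not_le.2 hc), fun h => absurd h (not_le.2 hc)⟩

lemma rel_intro {ρ : FP n} {x y : Fin n} (hxy : x ≤ y)
    (H : ∀ B ∈ ρ.parts, ∀ a ∈ B, x < a → a ≤ y → ∀ b ∈ B, x < b ∧ b ≤ y) :
    Rel ρ x y := by
  intro B hB a ha b hb hab
  by_cases hbx : b ≤ x
  · exact ⟨fun _ => le_trans hbx hxy, fun _ => hbx⟩
  · by_cases hby : b ≤ y
    · obtain ⟨h1, h2⟩ := H B hB b hb (not_le.1 hbx) hby a ha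
      exact absurd (hab.2 h2) (not_le.2 h1)
    · exact ⟨fun h => absurd (le_trans h hxy) hby, fun h => absurd h hby⟩

end PartB
section Gap
variable {n : ℕ}

lemma c_val_lt {x : Fin n} (h : x.val + 1 < n) : ((finRotate n) x).val = x.val + 1 := by
  cases n with
  | zero => exact x.elim0
  | succ m =>
    rw [finRotate_succ_apply, Fin.val_add_one]
    split
    · rename_i hh; rw [hh] at h; simp [Fin.last] at h
    · rfl

lemma c_val_last {x : Fin n} (hn : 0 < n) (h : x.val = n - 1) : ((finRotate n) x).val = 0 := by
  cases n with
  | zero => exact x.elim0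
  | succ m =>
    rw [finRotate_succ_apply, Fin.val_add_one]
    split
    · rfl
    · rename_i hh; simp at h; exact absurd (Fin.ext h) hh

/-- An element of a block distinct from `blk ρ x` is not `x`. -/
lemma mem_blk_ne {ρ : FP n} {B : Finset (Fin n)} (hB : B ∈ ρ.parts) {x a : Fin n}
    (haB : a ∈ B) (hne : B ≠ blk ρ x) : a ≠ x := fun h =>
  hne (ρ.eq_of_mem_parts hB (blk_mem ρ x) (h ▸ haB) (mem_blk ρ x))

/-- The one-step gap lemma : `z` and `rp⁻¹(z+1)` bound an interval which is a
union of `ρ`-blocks. -/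
lemma gap_step {ρ : FP n} {rp : Equiv.Perm (Fin n)} (hρ : IsNC ρ)
    (hrp : IsAssocPerm ρ rp) (z : Fin n) : Rel ρ z (rp⁻¹ (finRotate n z)) := by
  set e := finRotate n z with he
  set E := blk ρ e with hEdef
  by_cases hz : z.val + 1 < n
  · have heval : e.val = z.val + 1 := c_val_lt hz
    have hze : z < e := by rw [Fin.lt_def]; omega
    by_cases hmin : IsMinOf e E
    · have hw := ap_inv_of_min hrp hmin
      set w := rp⁻¹ e with hwdef
      have hew : e ≤ w := hw.2 e (mem_blk ρ e)
      have hzw : z ≤ w := le_of_lt (lt_of_lt_of_le hze hew)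
      apply rel_intro hzw
      intro B hB a haB hza haw b hbB
      by_cases hBE : B = E
      · subst hBE
        exact ⟨lt_of_lt_of_le hze (hmin.2 b hbB), hw.2 b hbB⟩
      · have hea : e < a := lt_of_le_of_ne
          (by rw [Fin.le_def]; rw [Fin.lt_def] at hza; omega)
          (Ne.symm (mem_blk_ne hB haB hBE))
        have haw' : a < w := lt_of_le_of_ne haw (by
          intro hc
          exact absurd (hc ▸ haB)
            (fun hh => hBE (ρ.eq_of_mem_parts hB (blk_mem ρ e) (hc ▸ haB) hw.1)))
        constructor
        · by_contra hc
          push_neg at hc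
          have hbe : b < e := lt_of_le_of_lt hc hze
          exact hBE (nc_cross hρ hB (blk_mem ρ e) hbe hea haw' hbB haB hmin.1 hw.1)
        · by_contra hc
          push_neg at hc
          exact hBE (nc_cross hρ (blk_mem ρ e) hB hea haw' hc hmin.1 hw.1 haB hbB).symm
    · have hex : ∃ y ∈ E, y < e := by
        by_contra hc
        push_neg at hc
        exact hmin ⟨mem_blk ρ e, fun y hy => hc y hy⟩
      obtain ⟨w', hw'E, hw'e⟩ := hex
      obtain ⟨hwE, hwe, hgap⟩ := ap_inv_of_not_min hrp hw'E hw'e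
      set w := rp⁻¹ e with hwdef
      have hwz : w ≤ z := by
        rw [Fin.le_def]; rw [Fin.lt_def] at hwe; omega
      rcases eq_or_lt_of_le hwz with h | h
      · rw [← h]; exact rel_refl ρ w
      · apply rel_symm
        apply rel_intro (le_of_lt h)
        intro B hB a haB hwa haz b hbB
        have hae : a < e := by
          rw [Fin.lt_def]; rw [Fin.le_def] at haz; omega
        have haE : a ∉ E := fun hc => absurd (hgap a hc hwa) (not_le.2 hae)
        have hBE : B ≠ E := fun hc => haE (hc ▸ haB)
        constructor
        · by_contra hc
          push_neg at hc
          have hbw : b < w := lt_of_le_of_ne hc (mem_blk_ne hB hbB (fun hh => hBE (hh.trans (blk_eq_of_mem (blk_mem ρ e) hwE))))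
          exact hBE (nc_cross hρ hB (blk_mem ρ e) hbw hwa hae hbB haB hwE (mem_blk ρ e))
        · by_contra hc
          push_neg at hc
          have heb : e < b := lt_of_le_of_ne
            (by rw [Fin.le_def]; rw [Fin.lt_def] at hc; omega)
            (Ne.symm (mem_blk_ne hB hbB hBE))
          exact hBE (nc_cross hρ (blk_mem ρ e) hB hwa hae heb hwE (mem_blk ρ e) haB hbB).symm
  · -- z is the last element
    have hn : 0 < n := by omega
    have hzval : z.val = n - 1 := by have := z.isLt; omega
    have heval : e.val = 0 := c_val_last hn hzval
    have hmin : IsMinOf e E := ⟨mem_blk ρ e, fun y _ => by rw [Fin.le_def]; omega⟩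
    have hw := ap_inv_of_min hrp hmin
    set w := rp⁻¹ e with hwdef
    have hwz : w ≤ z := by rw [Fin.le_def]; have := w.isLt; omega
    rcases eq_or_lt_of_le hwz with h | h
    · rw [← h]; exact rel_refl ρ w
    · apply rel_symm
      apply rel_intro (le_of_lt h)
      intro B hB a haB hwa haz b hbB
      have haE : a ∉ E := fun hc => absurd (hw.2 a hc) (not_le.2 hwa)
      have hBE : B ≠ E := fun hc => haE (hc ▸ haB)
      refine ⟨?_, by rw [Fin.le_def]; have := b.isLt; omega⟩
      by_contra hc
      push_neg at hc
      have hbw : b < w := lt_of_le_of_ne hc (mem_blk_ne hB hbB (fun hh => hBE (hh.trans (blk_eq_of_mem (blk_mem ρ e) hw.1))))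
      have heb : e < b := lt_of_le_of_ne
        (by rw [Fin.le_def]; omega)
        (Ne.symm (mem_blk_ne hB hbB hBE))
      exact hBE (nc_cross hρ (blk_mem ρ e) hB heb hbw hwa hmin.1 hw.1 hbB haB).symm

/-- Gap lemma, forward direction. -/
lemma gap_fwd {ρ κρ : FP n} {rp kp : Equiv.Perm (Fin n)} (hρ : IsNC ρ)
    (hrp : IsAssocPerm ρ rp) (hkp : IsAssocPerm κρ kp)
    (hcomp : kp = rp⁻¹ * finRotate n) {x y : Fin n}
    (h : SameBlock κρ x y) : Rel ρ x y := by
  have step : ∀ z, Rel ρ z (kp z) := by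
    intro z
    have : kp z = rp⁻¹ (finRotate n z) := by rw [hcomp]; rfl
    rw [this]
    exact gap_step hρ hrp z
  obtain ⟨B, hB, hx, hy⟩ := h
  have hne : B.Nonempty := ⟨x, hx⟩
  set m := B.min' hne with hm
  have hmin : IsMinOf m B := ⟨B.min'_mem hne, fun z hz => B.min'_le z hz⟩
  have iter : ∀ k, Rel ρ m (kp^[k] m) := by
    intro k
    induction k with
    | zero => exact rel_refl ρ m
    | succ k ih => rw [Function.iterate_succ_apply']; exact rel_trans ih (step _)
  obtain ⟨i, hi⟩ := ap_reach_min hkp hB hmin x hx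
  obtain ⟨j, hj⟩ := ap_reach_min hkp hB hmin y hy
  exact rel_trans (rel_symm (hi ▸ iter i)) (hj ▸ iter j)

/-- Gap lemma, backward direction. -/
lemma gap_bwd {ρ κρ : FP n} {rp kp : Equiv.Perm (Fin n)} (hρ : IsNC ρ)
    (hrp : IsAssocPerm ρ rp) (hkp : IsAssocPerm κρ kp)
    (hcomp : kp = rp⁻¹ * finRotate n) :
    ∀ (d : ℕ) (x y : Fin n), y.val ≤ x.val + d → x ≤ y → Rel ρ x y → SameBlock κρ x y := by
  intro d
  induction d with
  | zero =>
    intro x y hd hxy _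
    have : x = y := by
      rw [Fin.le_def] at hxy; exact Fin.ext (by omega)
    rw [this]; exact sb_refl κρ y
  | succ d ih =>
    intro x y hd hxy hrel
    rcases eq_or_lt_of_le hxy with h | hlt
    · rw [h]; exact sb_refl κρ y
    · set B := blk ρ y with hB
      have hymax : IsMaxOf y B := by
        refine ⟨mem_blk ρ y, fun b hb => ?_⟩
        exact (rel_mem_of hrel hxy (blk_mem ρ y) (mem_blk ρ y) hb hlt le_rfl).2
      have hne : B.Nonempty := ⟨y, mem_blk ρ y⟩
      set m := B.min' hne with hm
      have hminm : IsMinOf m B := ⟨B.min'_mem hne, fun z hz => B.min'_le z hz⟩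
      have hxm : x < m :=
        (rel_mem_of hrel hxy (blk_mem ρ y) (mem_blk ρ y) hminm.1 hlt le_rfl).1
      have hmy : m ≤ y := hymax.2 m hminm.1
      have hrpy : rp y = m := ap_max_eq hrp hymax hminm
      have hmpos : 0 < m.val := by rw [Fin.lt_def] at hxm; omega
      set m' : Fin n := ⟨m.val - 1, by have := m.isLt; omega⟩ with hm'
      have hcm' : finRotate n m' = m := by
        apply Fin.ext
        rw [c_val_lt (by simp [hm']; have := m.isLt; omega)]
        simp [hm']
        omega
      have hkpm' : kp m' = y := by
        rw [hcomp]
        show rp⁻¹ (finRotate n m') = y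
        rw [hcm', ← hrpy]
        simp
      have hsb1 : SameBlock κρ m' y := by
        rw [← hkpm']
        exact ap_sb hkp m'
      by_cases hxm' : x = m'
      · rw [hxm']; exact hsb1
      · have hxm'lt : x < m' := by
          rw [Fin.lt_def] at hxm ⊢
          simp [hm']
          rcases Nat.lt_or_ge x.val (m.val - 1) with h | h
          · exact h
          · exact absurd (Fin.ext (show x.val = m'.val by simp [hm']; omega) : x = m') hxm'
        -- Rel m' y : the interval [m, y] is a union of blocks
        have hrelm'y : Rel ρ m' y := by
          apply rel_intro (le_of_lt (lt_of_lt_of_le (show m' < m by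
            rw [Fin.lt_def]; simp [hm']; omega) hmy))
          intro D hD a haD hm'a hay b hbD
          by_cases hDB : D = B
          · subst hDB
            refine ⟨lt_of_lt_of_le (show m' < m by rw [Fin.lt_def]; simp [hm']; omega)
              (hminm.2 b hbD), hymax.2 b hbD⟩
          · have hma : m ≤ a := by rw [Fin.le_def]; rw [Fin.lt_def] at hm'a; simp [hm'] at hm'a; omega
            have hma' : m < a := by
              rcases lt_or_eq_of_le hma with h | h
              · exact h
              · exact absurd (h ▸ hminm.1) (fun hc => hDB (ρ.eq_of_mem_parts hD (blk_mem ρ y) haD hc))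
            have hay' : a < y := by
              rcases lt_or_eq_of_le hay with h | h
              · exact h
              · exact absurd (h ▸ mem_blk ρ y) (fun hc => hDB (ρ.eq_of_mem_parts hD (blk_mem ρ y) haD hc))
            have hxb : x < b ∧ b ≤ y :=
              rel_mem_of hrel hxy hD haD hbD (lt_trans hxm hma') (le_of_lt hay')
            refine ⟨?_, hxb.2⟩
            by_contra hc
            push_neg at hc
            have hbm : b < m := by
              rw [Fin.lt_def]; rw [Fin.le_def] at hc; simp [hm'] at hc; omega
            exact hDB (nc_cross hρ hD (blk_mem ρ y) hbm hma' hay' hbD haD hminm.1 (mem_blk ρ y))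
        have hrelxm' : Rel ρ x m' := rel_trans hrel (rel_symm hrelm'y)
        have hd' : m'.val ≤ x.val + d := by
          simp [hm']
          rw [Fin.le_def] at hmy
          omega
        exact sb_trans (ih x m' hd' (le_of_lt hxm'lt) hrelxm') hsb1

end Gap
section PartD
variable {n : ℕ}

/-- Monotonicity of the Kreweras complement (blockwise). -/
lemma kappa_mono {σ π κσ κ : FP n} {σp κσp pp kp : Equiv.Perm (Fin n)}
    (hσ : IsNC σ) (hπ : IsNC π)
    (hσp : IsAssocPerm σ σp) (hκσp : IsAssocPerm κσ κσp) (hσcomp : κσp = σp⁻¹ * finRotate n)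
    (hpp : IsAssocPerm π pp) (hkp : IsAssocPerm κ kp) (hcomp : kp = pp⁻¹ * finRotate n)
    (href : Refines σ π) {x y : Fin n} (h : SameBlock κ x y) : SameBlock κσ x y := by
  have key : ∀ x y : Fin n, x ≤ y → SameBlock κ x y → SameBlock κσ x y := by
    intro x y hxy h
    have hrelπ : Rel π x y := gap_fwd hπ hpp hkp hcomp h
    have hrelσ : Rel σ x y := by
      intro B hB a ha b hb hab
      obtain ⟨C, hC, hBC⟩ := href B hB
      exact hrelπ C hC a (hBC ha) b (hBC hb) hab
    exact gap_bwd hσ hσp hκσp hσcomp (y.val - x.val) x y (by omega) hxy hrelσ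
  rcases le_total x y with hxy | hxy
  · exact key x y hxy h
  · exact sb_symm (key y x hxy (sb_symm h))

/-- Forward direction : `Refines τ κσ`. -/
lemma forward_refines {σ τ κσ π κ : FP n} {σp κσp pp kp : Equiv.Perm (Fin n)}
    (hσ : IsNC σ) (hπ : IsNC π)
    (hσp : IsAssocPerm σ σp) (hκσp : IsAssocPerm κσ κσp) (hσcomp : κσp = σp⁻¹ * finRotate n)
    (hpp : IsAssocPerm π pp) (hkp : IsAssocPerm κ kp) (hcomp : kp = pp⁻¹ * finRotate n)
    (hllσ : Ll σ π) (hllτ : Ll τ κ) : Refines τ κσ := by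
  intro T hT
  have hne : T.Nonempty := τ.nonempty_of_mem_parts hT
  obtain ⟨t₀, ht₀⟩ := hne
  refine ⟨blk κσ t₀, blk_mem κσ t₀, ?_⟩
  intro t ht
  obtain ⟨U, hU, hTU⟩ := hllτ.1 T hT
  have hsb : SameBlock κ t₀ t := ⟨U, hU, hTU ht₀, hTU ht⟩
  have := kappa_mono hσ hπ hσp hκσp hσcomp hpp hkp hcomp hllσ.1 hsb
  exact sb_iff.1 this

/-- If `0 < n`, associated permutation's inverse at `0` is the max of the block of `0`. -/
lemma ap_inv_zero {π : FP n} {p : Equiv.Perm (Fin n)} (hp : IsAssocPerm π p) (hn : 0 < n) :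
    IsMaxOf (p⁻¹ ⟨0, hn⟩) (blk π ⟨0, hn⟩) :=
  ap_inv_of_min hp ⟨mem_blk π _, fun y _ => by rw [Fin.le_def]; exact Nat.zero_le _⟩

/-- Associated permutation at the last element is the min of its block. -/
lemma ap_last {π : FP n} {p : Equiv.Perm (Fin n)} (hp : IsAssocPerm π p) (hn : 0 < n) :
    IsMinOf (p ⟨n-1, Nat.sub_lt (by omega) Nat.one_pos⟩) (blk π ⟨n-1, Nat.sub_lt (by omega) Nat.one_pos⟩) := by
  set z : Fin n := ⟨n-1, Nat.sub_lt (by omega) Nat.one_pos⟩ with hz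
  rcases (hp (blk π z) (blk_mem π z) z (mem_blk π z)).2 with ⟨h1, _⟩ | ⟨_, h2⟩
  · exfalso
    rw [Fin.lt_def] at h1
    have h2 := (p z).isLt
    have hzv : (z : ℕ) = n - 1 := rfl
    omega
  · exact h2

/-- Forward direction : the permutation condition. -/
lemma forward_perm {σ τ π κ : FP n} {σp τp pp kp : Equiv.Perm (Fin n)} (hn : 0 < n)
    (hσp : IsAssocPerm σ σp) (hτp : IsAssocPerm τ τp)
    (hpp : IsAssocPerm π pp) (hkp : IsAssocPerm κ kp) (hcomp : kp = pp⁻¹ * finRotate n)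
    (hllσ : Ll σ π) (hllτ : Ll τ κ) :
    σp⁻¹ ⟨0, hn⟩ = τp ⟨n-1, Nat.sub_lt (by omega) Nat.one_pos⟩ := by
  set z0 : Fin n := ⟨0, hn⟩ with hz0
  set zl : Fin n := ⟨n-1, Nat.sub_lt (by omega) Nat.one_pos⟩ with hzl
  -- σp⁻¹ 0 = max of B₀
  have h1 : IsMaxOf (σp⁻¹ z0) (blk σ z0) := ap_inv_zero hσp hn
  -- pp⁻¹ 0 = max of C₀
  have h2 : IsMaxOf (pp⁻¹ z0) (blk π z0) := ap_inv_zero hpp hn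
  -- max B₀ = max C₀ using Ll σ π
  have h3 : σp⁻¹ z0 = pp⁻¹ z0 := by
    obtain ⟨B, hB, x, y, hxmin, hymax, hxB, hyB⟩ := hllσ.2 (blk π z0) (blk_mem π z0)
    have hx0 : x = z0 := le_antisymm (hxmin.2 z0 (mem_blk π z0))
      (by rw [Fin.le_def]; exact Nat.zero_le _)
    have hBB : B = blk σ z0 := by
      rw [← blk_eq_of_mem hB (hx0 ▸ hxB)]
    have hy : y = pp⁻¹ z0 := isMaxOf_unique hymax h2
    obtain ⟨C, hC, hBC⟩ := hllσ.1 B hB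
    have hCeq : C = blk π z0 := by
      rw [← blk_eq_of_mem hC (hBC (hBB ▸ mem_blk σ z0))]
    apply le_antisymm
    · have hmem : σp⁻¹ z0 ∈ blk π z0 := hCeq ▸ hBC (hBB ▸ h1.1)
      rw [← hy]
      exact hymax.2 _ hmem
    · rw [← hy]
      exact h1.2 y (hBB ▸ hyB)
  -- kp zl = pp⁻¹ z0
  have h4 : kp zl = pp⁻¹ z0 := by
    rw [hcomp]
    show pp⁻¹ (finRotate n zl) = pp⁻¹ z0
    congr 1
    exact Fin.ext (by rw [c_val_last hn (by simp [hzl])])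
  -- kp zl = min of blk κ zl
  have h5 : IsMinOf (kp zl) (blk κ zl) := ap_last hkp hn
  -- min blk κ zl = min blk τ zl via Ll τ κ
  have h6 : kp zl = τp zl := by
    obtain ⟨T, hT, x, y, hxmin, hymax, hxT, hyT⟩ := hllτ.2 (blk κ zl) (blk_mem κ zl)
    have hyl : y = zl := le_antisymm
      (by rw [Fin.le_def]; show (y:ℕ) ≤ n - 1; have := y.isLt; omega)
      (hymax.2 zl (mem_blk κ zl))
    have hTeq : T = blk τ zl := by
      rw [← blk_eq_of_mem hT (hyl ▸ hyT)]
    have hx : x = kp zl := isMinOf_unique hxmin h5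
    -- τp zl = min of blk τ zl
    have h7 : IsMinOf (τp zl) (blk τ zl) := ap_last hτp hn
    -- x ∈ T and x = min of blk κ zl ⊇ T, so x = min T
    have hxminT : IsMinOf x T := by
      refine ⟨hxT, fun w hw => ?_⟩
      obtain ⟨U, hU, hTU⟩ := hllτ.1 T hT
      have hUeq : U = blk κ zl := by
        rw [← blk_eq_of_mem hU (hTU (hyl ▸ hyT))]
      exact hxmin.2 w (hUeq ▸ hTU hw)
    rw [← hx]
    exact isMinOf_unique hxminT (hTeq ▸ h7)
  rw [h3, ← h4, h6]

/-- The key "convexity" lemma for uniqueness. -/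
lemma C1_lemma {σ κσ π κ : FP n} {σp κσp pp kp : Equiv.Perm (Fin n)}
    (hσ : IsNC σ) (hπ : IsNC π)
    (hσp : IsAssocPerm σ σp) (hκσp : IsAssocPerm κσ κσp) (hσcomp : κσp = σp⁻¹ * finRotate n)
    (hpp : IsAssocPerm π pp) (hkp : IsAssocPerm κ kp) (hcomp : kp = pp⁻¹ * finRotate n)
    (hllσ : Ll σ π) {U : Finset (Fin n)} (hU : U ∈ κ.parts) {u v x : Fin n}
    (hu : IsMinOf u U) (hv : IsMaxOf v U) (hsb : SameBlock κσ u x)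
    (hux : u ≤ x) (hxv : x ≤ v) : x ∈ U := by
  have hrelπ : Rel π u v := gap_fwd hπ hpp hkp hcomp ⟨U, hU, hu.1, hv.1⟩
  have hrelσ : Rel σ u x := gap_fwd hσ hσp hκσp hσcomp hsb
  have huv : u ≤ v := le_trans hux hxv
  have hrelxv : Rel π x v := by
    apply rel_intro hxv
    intro C hC a ha hxa hav b hb
    have hb2 := rel_mem_of hrelπ huv hC ha hb (lt_of_le_of_lt hux hxa) hav
    refine ⟨?_, hb2.2⟩
    by_contra hbc
    push_neg at hbc
    obtain ⟨B, hB, p, q, hpmin, hqmax, hpB, hqB⟩ := hllσ.2 C hC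
    have hp : u < p ∧ p ≤ v := rel_mem_of hrelπ huv hC ha hpmin.1 (lt_of_le_of_lt hux hxa) hav
    have hpx : p ≤ x := le_trans (hpmin.2 b hb) hbc
    have hq := rel_mem_of hrelσ hux hB hpB hqB hp.1 hpx
    exact absurd (lt_of_lt_of_le hxa (hqmax.2 a ha)) (not_lt.2 hq.2)
  have hsbxv : SameBlock κ x v :=
    gap_bwd hπ hpp hkp hcomp (v.val - x.val) x v (by omega) hxv hrelxv
  obtain ⟨U0, hU0, hxU0, hvU0⟩ := hsbxv
  rwa [κ.eq_of_mem_parts hU0 hU hvU0 hv.1] at hxU0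

/-- The characterization predicate `Φ`. -/
def Phi (τ κσ : FP n) (x y : Fin n) : Prop :=
  ∃ W ∈ κσ.parts, x ∈ W ∧ y ∈ W ∧ ∃ T ∈ τ.parts, T ⊆ W ∧ ∃ u v : Fin n,
    IsMinOf u T ∧ IsMaxOf v T ∧ u ≤ x ∧ x ≤ v ∧ u ≤ y ∧ y ≤ v

lemma sb_kappa_iff_phi {σ τ κσ π κ : FP n} {σp κσp pp kp : Equiv.Perm (Fin n)}
    (hσ : IsNC σ) (hπ : IsNC π)
    (hσp : IsAssocPerm σ σp) (hκσp : IsAssocPerm κσ κσp) (hσcomp : κσp = σp⁻¹ * finRotate n)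
    (hpp : IsAssocPerm π pp) (hkp : IsAssocPerm κ kp) (hcomp : kp = pp⁻¹ * finRotate n)
    (hllσ : Ll σ π) (hllτ : Ll τ κ) (x y : Fin n) :
    SameBlock κ x y ↔ Phi τ κσ x y := by
  constructor
  · intro h
    obtain ⟨U, hU, hx, hy⟩ := h
    obtain ⟨T, hT, u, v, humin, hvmax, huT, hvT⟩ := hllτ.2 U hU
    -- T ⊆ U
    obtain ⟨U', hU', hTU'⟩ := hllτ.1 T hT
    have hU'U : U' = U := κ.eq_of_mem_parts hU' hU (hTU' huT) humin.1
    have hTU : T ⊆ U := hU'U ▸ hTU'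
    -- W := blk κσ u ⊇ U
    have hUW : ∀ z ∈ U, z ∈ blk κσ u := by
      intro z hz
      exact sb_iff.1 (kappa_mono hσ hπ hσp hκσp hσcomp hpp hkp hcomp hllσ.1 ⟨U, hU, humin.1, hz⟩)
    refine ⟨blk κσ u, blk_mem κσ u, hUW x hx, hUW y hy, T, hT, fun t ht => hUW t (hTU ht),
      T.min' ⟨u, huT⟩, T.max' ⟨u, huT⟩, isMinOf_min' hT, isMaxOf_max' hT, ?_, ?_, ?_, ?_⟩
    · exact le_trans (T.min'_le u huT) (humin.2 x hx)
    · exact le_trans (hvmax.2 x hx) (T.le_max' v hvT)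
    · exact le_trans (T.min'_le u huT) (humin.2 y hy)
    · exact le_trans (hvmax.2 y hy) (T.le_max' v hvT)
  · rintro ⟨W, hW, hxW, hyW, T, hT, hTW, u, v, humin, hvmax, hux, hxv, huy, hyv⟩
    -- U' := block of κ containing T
    obtain ⟨U', hU', hTU'⟩ := hllτ.1 T hT
    set U := U' with hUdef
    have hmU : U.Nonempty := κ.nonempty_of_mem_parts hU'
    have huU : u ∈ U := hTU' humin.1
    have hvU : v ∈ U := hTU' hvmax.1
    -- min U ≤ u, v ≤ max U
    have hminU := isMinOf_min' hU'
    have hmaxU := isMaxOf_max' hU'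
    set mu := U.min' (blk_nonempty hU') with hmu
    set Mv := U.max' (blk_nonempty hU') with hMv
    -- mu ∈ W : U ⊆ W
    have hUW : ∀ z ∈ U, z ∈ W := by
      intro z hz
      have h1 : SameBlock κσ u z :=
        kappa_mono hσ hπ hσp hκσp hσcomp hpp hkp hcomp hllσ.1 ⟨U, hU', huU, hz⟩
      have h2 : blk κσ u = W := blk_eq_of_mem hW (hTW humin.1)
      exact h2 ▸ sb_iff.1 h1
    have hxmem : x ∈ U := by
      apply C1_lemma hσ hπ hσp hκσp hσcomp hpp hkp hcomp hllσ hU' hminU hmaxU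
        (x := x) (u := mu) (v := Mv)
      · exact ⟨W, hW, hUW mu (U.min'_mem _), hxW⟩
      · exact le_trans (U.min'_le u huU) hux
      · exact le_trans hxv (U.le_max' v hvU)
    have hymem : y ∈ U := by
      apply C1_lemma hσ hπ hσp hκσp hσcomp hpp hkp hcomp hllσ hU' hminU hmaxU
        (x := y) (u := mu) (v := Mv)
      · exact ⟨W, hW, hUW mu (U.min'_mem _), hyW⟩
      · exact le_trans (U.min'_le u huU) huy
      · exact le_trans hyv (U.le_max' v hvU)
    exact ⟨U, hU', hxmem, hymem⟩

/-- Two finpartitions with the same `SameBlock` relation coincide. -/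
lemma fp_eq_of_sb {P Q : FP n} (h : ∀ x y, SameBlock P x y ↔ SameBlock Q x y) : P = Q := by
  have key : ∀ (P Q : FP n), (∀ x y, SameBlock P x y ↔ SameBlock Q x y) →
      ∀ B ∈ P.parts, B ∈ Q.parts := by
    intro P Q h B hB
    obtain ⟨b₀, hb₀⟩ := P.nonempty_of_mem_parts hB
    have : B = blk Q b₀ := by
      ext z
      constructor
      · intro hz
        exact sb_iff.1 ((h b₀ z).1 ⟨B, hB, hb₀, hz⟩)
      · intro hz
        have := (h b₀ z).2 (sb_iff.2 hz)
        obtain ⟨B', hB', h1, h2⟩ := this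
        rwa [P.eq_of_mem_parts hB hB' hb₀ h1]
    rw [this]; exact blk_mem Q b₀
  have : P.parts = Q.parts := Finset.Subset.antisymm
    (fun B hB => key P Q h B hB) (fun B hB => key Q P (fun x y => (h x y).symm) B hB)
  cases P; cases Q; simpa using this

/-- Uniqueness. -/
lemma uniqueness {σ τ κσ : FP n} {σp κσp : Equiv.Perm (Fin n)}
    (hσ : IsNC σ) (hσp : IsAssocPerm σ σp) (hκσp : IsAssocPerm κσ κσp)
    (hσcomp : κσp = σp⁻¹ * finRotate n)
    (π₁ κ₁ π₂ κ₂ : FP n) (h1 : IsNC π₁) (hk1 : IsKrewerasPair π₁ κ₁)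
    (hl1 : Ll σ π₁) (hlt1 : Ll τ κ₁)
    (h2 : IsNC π₂) (hk2 : IsKrewerasPair π₂ κ₂) (hl2 : Ll σ π₂) (hlt2 : Ll τ κ₂) :
    π₁ = π₂ := by
  obtain ⟨pp₁, kp₁, hpp₁, hkp₁, hcomp₁⟩ := hk1
  obtain ⟨pp₂, kp₂, hpp₂, hkp₂, hcomp₂⟩ := hk2
  have hκeq : κ₁ = κ₂ := by
    apply fp_eq_of_sb
    intro x y
    rw [sb_kappa_iff_phi hσ h1 hσp hκσp hσcomp hpp₁ hkp₁ hcomp₁ hl1 hlt1 x y,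
      sb_kappa_iff_phi hσ h2 hσp hκσp hσcomp hpp₂ hkp₂ hcomp₂ hl2 hlt2 x y]
  subst hκeq
  have hkpeq : kp₁ = kp₂ := ap_unique hkp₁ hkp₂
  have hppeq : pp₁ = pp₂ := by
    have e1 : pp₁ = finRotate n * kp₁⁻¹ := by
      rw [hcomp₁]; group
    have e2 : pp₂ = finRotate n * kp₂⁻¹ := by
      rw [hcomp₂]; group
    rw [e1, e2, hkpeq]
  exact ap_part_det hpp₁ (hppeq ▸ hpp₂)

end PartD
section PartE1
variable {n : ℕ}

lemma ll_refl (σ : FP n) : Ll σ σ := by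
  refine ⟨fun B hB => ⟨B, hB, subset_rfl⟩, fun C hC => ?_⟩
  exact ⟨C, hC, C.min' (blk_nonempty hC), C.max' (blk_nonempty hC),
    isMinOf_min' hC, isMaxOf_max' hC, C.min'_mem _, C.max'_mem _⟩

lemma ll_trans {σ σ' π : FP n} (h1 : Ll σ σ') (h2 : Ll σ' π) : Ll σ π := by
  constructor
  · intro B hB
    obtain ⟨B', hB', hBB'⟩ := h1.1 B hB
    obtain ⟨C, hC, hB'C⟩ := h2.1 B' hB'
    exact ⟨C, hC, hBB'.trans hB'C⟩
  · intro C hC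
    obtain ⟨B', hB', x, y, hxmin, hymax, hxB', hyB'⟩ := h2.2 C hC
    obtain ⟨B, hB, x', y', hx'min, hy'max, hx'B, hy'B⟩ := h1.2 B' hB'
    obtain ⟨C', hC', hB'C'⟩ := h2.1 B' hB'
    have hCC' : C' = C := π.eq_of_mem_parts hC' hC (hB'C' hxB') hxmin.1
    have hx' : x' = x := le_antisymm (hx'min.2 x hxB')
      (hxmin.2 x' (hCC' ▸ hB'C' hx'min.1))
    have hy' : y' = y := le_antisymm (hymax.2 y' (hCC' ▸ hB'C' hy'max.1))
      (hy'max.2 y hyB')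
    exact ⟨B, hB, x, y, hxmin, hymax, hx' ▸ hx'B, hy' ▸ hy'B⟩

/-- Merge two blocks of a finpartition. -/
noncomputable def mergeFP (π : FP n) (A B : Finset (Fin n)) (hA : A ∈ π.parts)
    (hB : B ∈ π.parts) (hne : A ≠ B) : FP n where
  parts := insert (A ∪ B) ((π.parts.erase A).erase B)
  supIndep := by
    rw [Finset.supIndep_iff_pairwiseDisjoint]
    intro C hC D hD hCD
    simp only [Finset.coe_insert, Set.mem_insert_iff, Finset.mem_coe, Finset.mem_erase] at hC hD
    have hdis := π.disjoint
    rcases hC with hC | ⟨hCB, hCA, hC⟩ <;> rcases hD with hD | ⟨hDB, hDA, hD⟩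
    · exact absurd (hC.trans hD.symm) hCD
    · subst hC
      have d1 : Disjoint A D := hdis hA hD (Ne.symm hDA)
      have d2 : Disjoint B D := hdis hB hD (Ne.symm hDB)
      exact (id (Finset.disjoint_union_left.2 ⟨d1, d2⟩) : Disjoint (id (A ∪ B)) (id D))
    · subst hD
      have d1 : Disjoint C A := hdis hC hA hCA
      have d2 : Disjoint C B := hdis hC hB hCB
      exact (id (Finset.disjoint_union_right.2 ⟨d1, d2⟩) : Disjoint (id C) (id (A ∪ B)))
    · exact hdis hC hD hCD
  sup_parts := by
    apply le_antisymm
    · apply Finset.sup_le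
      intro C hC
      exact fun x _ => mem_univ x
    · intro x _
      rw [Finset.mem_sup]
      obtain ⟨C, hC, hxC⟩ := π.exists_mem (mem_univ x)
      by_cases h1 : C = A
      · exact ⟨A ∪ B, Finset.mem_insert_self _ _, Finset.mem_union_left _ (h1 ▸ hxC)⟩
      · by_cases h2 : C = B
        · exact ⟨A ∪ B, Finset.mem_insert_self _ _, Finset.mem_union_right _ (h2 ▸ hxC)⟩
        · exact ⟨C, Finset.mem_insert_of_mem (Finset.mem_erase.2 ⟨h2, Finset.mem_erase.2 ⟨h1, hC⟩⟩), hxC⟩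
  bot_notMem := by
    simp only [Finset.bot_eq_empty, Finset.mem_insert, Finset.mem_erase]
    rintro (h | ⟨-, -, h⟩)
    · obtain ⟨a, ha⟩ := π.nonempty_of_mem_parts hA
      exact absurd (h ▸ Finset.mem_union_left B ha) (Finset.notMem_empty a)
    · exact π.bot_notMem (by simpa using h)

lemma mem_mergeFP {π : FP n} {A B : Finset (Fin n)} {hA : A ∈ π.parts} {hB : B ∈ π.parts}
    {hne : A ≠ B} {C : Finset (Fin n)} :
    C ∈ (mergeFP π A B hA hB hne).parts ↔ C = A ∪ B ∨ (C ∈ π.parts ∧ C ≠ A ∧ C ≠ B) := by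
  simp only [mergeFP, Finset.mem_insert, Finset.mem_erase]
  tauto

/-- Split one block of a finpartition into two nonempty pieces. -/
noncomputable def splitFP (π : FP n) (W W₁ W₂ : Finset (Fin n)) (hW : W ∈ π.parts)
    (hunion : W₁ ∪ W₂ = W) (hdis : Disjoint W₁ W₂) (h1 : W₁.Nonempty) (h2 : W₂.Nonempty) :
    FP n where
  parts := insert W₁ (insert W₂ (π.parts.erase W))
  supIndep := by
    rw [Finset.supIndep_iff_pairwiseDisjoint]
    intro C hC D hD hCD
    simp only [Finset.coe_insert, Set.mem_insert_iff, Finset.mem_coe, Finset.mem_erase] at hC hD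
    have hdisj := π.disjoint
    have hsub1 : W₁ ⊆ W := hunion ▸ Finset.subset_union_left
    have hsub2 : W₂ ⊆ W := hunion ▸ Finset.subset_union_right
    have key : ∀ D' ∈ π.parts, D' ≠ W → Disjoint W D' := fun D' hD' hne =>
      hdisj hW hD' (fun h => hne h.symm)
    rcases hC with hC | hC | ⟨hCW, hC⟩ <;> rcases hD with hD | hD | ⟨hDW, hD⟩
    · exact absurd (hC.trans hD.symm) hCD
    · subst hC; subst hD; exact hdis
    · subst hC; exact Finset.disjoint_of_subset_left hsub1 (key D hD hDW)
    · subst hC; subst hD; exact hdis.symm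
    · exact absurd (hC.trans hD.symm) hCD
    · subst hC; exact Finset.disjoint_of_subset_left hsub2 (key D hD hDW)
    · subst hD; exact (Finset.disjoint_of_subset_left hsub1 (key C hC hCW)).symm
    · subst hD; exact (Finset.disjoint_of_subset_left hsub2 (key C hC hCW)).symm
    · exact hdisj hC hD hCD
  sup_parts := by
    apply le_antisymm
    · apply Finset.sup_le
      intro C _
      exact fun x _ => mem_univ x
    · intro x _
      rw [Finset.mem_sup]
      obtain ⟨C, hC, hxC⟩ := π.exists_mem (mem_univ x)
      by_cases h : C = W
      · subst h
        rw [← hunion] at hxC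
        rcases Finset.mem_union.1 hxC with h' | h'
        · exact ⟨W₁, Finset.mem_insert_self _ _, h'⟩
        · exact ⟨W₂, Finset.mem_insert_of_mem (Finset.mem_insert_self _ _), h'⟩
      · exact ⟨C, Finset.mem_insert_of_mem (Finset.mem_insert_of_mem
          (Finset.mem_erase.2 ⟨h, hC⟩)), hxC⟩
  bot_notMem := by
    simp only [Finset.bot_eq_empty, Finset.mem_insert, Finset.mem_erase]
    rintro (h | h | ⟨-, h⟩)
    · exact absurd (h ▸ h1) (by simp)
    · exact absurd (h ▸ h2) (by simp)
    · exact π.bot_notMem (by simpa using h)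

lemma mem_splitFP {π : FP n} {W W₁ W₂ : Finset (Fin n)} {hW : W ∈ π.parts}
    {hunion : W₁ ∪ W₂ = W} {hdis : Disjoint W₁ W₂} {h1 : W₁.Nonempty} {h2 : W₂.Nonempty}
    {C : Finset (Fin n)} :
    C ∈ (splitFP π W W₁ W₂ hW hunion hdis h1 h2).parts ↔
      C = W₁ ∨ C = W₂ ∨ (C ∈ π.parts ∧ C ≠ W) := by
  simp only [splitFP, Finset.mem_insert, Finset.mem_erase]
  tauto

end PartE1
section PartE2
variable {n : ℕ}

lemma merge_step (hn : 0 < n) {σ τ κσ : FP n} {sp kσp : Equiv.Perm (Fin n)}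
    (hσ : IsNC σ) (hτ : IsNC τ)
    (hsp : IsAssocPerm σ sp) (hκσp : IsAssocPerm κσ kσp)
    (hcomp : kσp = sp⁻¹ * finRotate n)
    (href : Refines τ κσ)
    (hbdry : ∃ m : Fin n, IsMaxOf m (blk σ ⟨0, hn⟩) ∧ IsMinOf m (blk τ ⟨n-1, Nat.sub_lt (by omega) Nat.one_pos⟩))
    {W : Finset (Fin n)} (hW : W ∈ κσ.parts)
    (hviol : ∀ T ∈ τ.parts, ∀ x y : Fin n,
      ¬(IsMinOf x W ∧ IsMaxOf y W ∧ x ∈ T ∧ y ∈ T)) :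
    ∃ (σ' κσ' : FP n) (sp' kσp' : Equiv.Perm (Fin n)),
      IsNC σ' ∧ IsAssocPerm σ' sp' ∧ IsAssocPerm κσ' kσp' ∧
      kσp' = sp'⁻¹ * finRotate n ∧ Refines τ κσ' ∧
      (∃ m : Fin n, IsMaxOf m (blk σ' ⟨0, hn⟩) ∧ IsMinOf m (blk τ ⟨n-1, Nat.sub_lt (by omega) Nat.one_pos⟩)) ∧
      Ll σ σ' ∧ σ'.parts.card + 1 = σ.parts.card := by
  classical
  set z0 : Fin n := ⟨0, hn⟩ with hz0
  set zl : Fin n := ⟨n-1, Nat.sub_lt (by omega) Nat.one_pos⟩ with hzl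
  have hz0v : (z0 : ℕ) = 0 := rfl
  have hzlv : (zl : ℕ) = n - 1 := rfl
  have hWne : W.Nonempty := κσ.nonempty_of_mem_parts hW
  set w₁ := W.min' hWne with hw₁
  set w₂ := W.max' hWne with hw₂
  have hw₁W : w₁ ∈ W := W.min'_mem hWne
  have hw₂W : w₂ ∈ W := W.max'_mem hWne
  -- the τ-block of w₂ is contained in W
  have hTW : blk τ w₂ ⊆ W := by
    obtain ⟨W', hW', hTW'⟩ := href _ (blk_mem τ w₂)
    have : W' = W := κσ.eq_of_mem_parts hW' hW (hTW' (mem_blk τ w₂)) hw₂W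
    rwa [this] at hTW'
  have hTne : (blk τ w₂).Nonempty := ⟨w₂, mem_blk τ w₂⟩
  set μ := (blk τ w₂).min' hTne with hμdef
  have hμT : μ ∈ blk τ w₂ := (blk τ w₂).min'_mem hTne
  have hμmin : ∀ t ∈ blk τ w₂, μ ≤ t := fun t ht => (blk τ w₂).min'_le t ht
  have hμW : μ ∈ W := hTW hμT
  -- w₁ < μ : otherwise W would not be violating
  have hw₁μ : w₁ < μ := by
    rcases lt_or_eq_of_le (W.min'_le μ hμW) with h | h
    · exact h
    · exfalso
      exact hviol (blk τ w₂) (blk_mem τ w₂) w₁ w₂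
        ⟨⟨hw₁W, fun y hy => W.min'_le y hy⟩, ⟨hw₂W, fun y hy => W.le_max' y hy⟩,
          (by rw [hw₁, h]; exact hμT), mem_blk τ w₂⟩
  -- w₂ is not the last element (uses the boundary condition)
  have hw₂l : w₂.val < n - 1 := by
    by_contra hc
    push_neg at hc
    have hw₂zl : w₂ = zl := Fin.ext (by rw [hzlv]; have := w₂.isLt; omega)
    obtain ⟨m, hm1, hm2⟩ := hbdry
    have hμm : μ = m := by
      have : blk τ zl = blk τ w₂ := by rw [hw₂zl]
      exact isMinOf_unique ⟨hμT, hμmin⟩ (this ▸ hm2)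
    have hrel : Rel σ w₁ zl := gap_fwd hσ hsp hκσp hcomp ⟨W, hW, hw₁W, hw₂zl ▸ hw₂W⟩
    obtain ⟨hbad, -⟩ := rel_mem_of hrel
      (by rw [Fin.le_def, hzlv]; have := w₁.isLt; omega)
      (blk_mem σ z0) (hμm ▸ hm1.1 : μ ∈ blk σ z0) (mem_blk σ z0) hw₁μ
      (by rw [Fin.le_def, hzlv]; have := μ.isLt; omega)
    rw [Fin.lt_def] at hbad
    omega
  -- ν : the predecessor of μ in W
  set Wlt := W.filter (fun w => w < μ) with hWlt
  have hWltne : Wlt.Nonempty := ⟨w₁, Finset.mem_filter.2 ⟨hw₁W, hw₁μ⟩⟩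
  set ν := Wlt.max' hWltne with hνdef
  have hνW : ν ∈ W := (Finset.mem_filter.1 (Wlt.max'_mem hWltne)).1
  have hνμ : ν < μ := (Finset.mem_filter.1 (Wlt.max'_mem hWltne)).2
  have hνmax : ∀ w ∈ W, w < μ → w ≤ ν := fun w hw hwμ =>
    Wlt.le_max' w (Finset.mem_filter.2 ⟨hw, hwμ⟩)
  have hw₁ν : w₁ ≤ ν := hνmax w₁ hw₁W hw₁μ
  have hμw₂ : μ ≤ w₂ := W.le_max' μ hμW
  -- kσp ν = μ
  have hblkν : blk κσ ν = W := blk_eq_of_mem hW hνW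
  have hkν : kσp ν = μ := by
    apply ap_succ_eq hκσp (hblkν ▸ hμW) hνμ
    intro w hw hνw
    rw [hblkν] at hw
    by_contra hc
    exact absurd (hνmax w hw (not_le.1 hc)) (not_le.2 hνw)
  have hν1 : ν.val + 1 < n := by
    rw [Fin.lt_def] at hνμ
    rw [Fin.le_def] at hμw₂
    omega
  set νs := finRotate n ν with hνsdef
  have hνs : νs.val = ν.val + 1 := c_val_lt hν1
  have hspμ : sp μ = νs := by
    have h1 : kσp ν = sp⁻¹ νs := by rw [hcomp]; rfl
    rw [hkν] at h1
    rw [h1]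
    simp
  -- A₁
  set A₁ := blk σ μ with hA₁def
  have hμA₁ : μ ∈ A₁ := mem_blk σ μ
  have hνsA₁ : νs ∈ A₁ := hspμ ▸ ap_mem hsp μ
  have hA₁mem : A₁ ∈ σ.parts := blk_mem σ μ
  have hA₁mm : IsMaxOf μ A₁ ∧ IsMinOf νs A₁ := by
    rcases (hsp A₁ hA₁mem μ hμA₁).2 with ⟨h1, _⟩ | h
    · exfalso
      rw [hspμ, Fin.lt_def] at h1
      rw [Fin.lt_def] at hνμ
      omega
    · rwa [hspμ] at h
  have hA₁bd : ∀ a ∈ A₁, ν < a ∧ a ≤ μ := by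
    intro a ha
    refine ⟨?_, hA₁mm.1.2 a ha⟩
    have := hA₁mm.2.2 a ha
    rw [Fin.le_def, hνs] at this
    rw [Fin.lt_def]
    omega
  -- kσp w₂ = w₁
  have hblkw₂ : blk κσ w₂ = W := blk_eq_of_mem hW hw₂W
  have hkw₂ : kσp w₂ = w₁ := by
    apply ap_max_eq hκσp
    · rw [hblkw₂]; exact ⟨hw₂W, fun y hy => W.le_max' y hy⟩
    · rw [hblkw₂]; exact ⟨hw₁W, fun y hy => W.min'_le y hy⟩
  have hw₂1 : w₂.val + 1 < n := by omega
  set w₂s := finRotate n w₂ with hw₂sdef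
  have hw₂s : w₂s.val = w₂.val + 1 := c_val_lt hw₂1
  have hspw₁ : sp w₁ = w₂s := by
    have h1 : kσp w₂ = sp⁻¹ w₂s := by rw [hcomp]; rfl
    rw [hkw₂] at h1
    rw [h1]
    simp
  -- A₂
  set A₂ := blk σ w₁ with hA₂def
  have hw₁A₂ : w₁ ∈ A₂ := mem_blk σ w₁
  have hA₂mem : A₂ ∈ σ.parts := blk_mem σ w₁
  have hw₂sA₂ : w₂s ∈ A₂ := hspw₁ ▸ ap_mem hsp w₁
  have hA₂gap : ∀ x ∈ A₂, w₁ < x → w₂s ≤ x := by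
    rcases (hsp A₂ hA₂mem w₁ hw₁A₂).2 with ⟨_, h2⟩ | ⟨h1, _⟩
    · rwa [hspw₁] at h2
    · exfalso
      have := h1.2 w₂s hw₂sA₂
      rw [Fin.le_def, hw₂s] at this
      rw [Fin.le_def] at hw₁ν hμw₂
      rw [Fin.lt_def] at hνμ
      omega
  have hA₂bd : ∀ a ∈ A₂, a ≤ w₁ ∨ w₂s ≤ a := by
    intro a ha
    by_cases h : a ≤ w₁
    · exact Or.inl h
    · exact Or.inr (hA₂gap a ha (not_le.1 h))
  have hA₁₂ : A₁ ≠ A₂ := by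
    intro h
    rcases hA₂bd μ (h ▸ hμA₁) with h' | h'
    · exact absurd (lt_of_le_of_lt h' hw₁μ) (lt_irrefl μ)
    · rw [Fin.le_def, hw₂s] at h'
      rw [Fin.le_def] at hμw₂
      omega
  -- useful : Rel σ ν w₂
  have hRelW : Rel σ ν w₂ := gap_fwd hσ hsp hκσp hcomp ⟨W, hW, hνW, hw₂W⟩
  have hνw₂ : ν ≤ w₂ := le_trans (le_of_lt hνμ) hμw₂
  -- the merged partition
  set σ' := mergeFP σ A₁ A₂ hA₁mem hA₂mem hA₁₂ with hσ'def
  have hAmem : A₁ ∪ A₂ ∈ σ'.parts := mem_mergeFP.2 (Or.inl rfl)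
  -- val facts for omega
  have hvw₁ν : w₁.val ≤ ν.val := hw₁ν
  have hvνμ : ν.val < μ.val := hνμ
  have hvμw₂ : μ.val ≤ w₂.val := hμw₂
  have hb1 : ∀ a ∈ A₁, ν.val < a.val ∧ a.val ≤ μ.val := fun a ha =>
    ⟨Fin.lt_def.1 (hA₁bd a ha).1, Fin.le_def.1 (hA₁bd a ha).2⟩
  have hb2 : ∀ a ∈ A₂, a.val ≤ w₁.val ∨ w₂.val + 1 ≤ a.val := fun a ha =>
    (hA₂bd a ha).imp Fin.le_def.1 (fun h => by rw [Fin.le_def, hw₂s] at h; exact h)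
  have hnea : ∀ {Q : Finset (Fin n)}, Q ∈ σ.parts → Q ≠ A₁ →
      ∀ {a : Fin n}, a ∈ Q → ∀ {x : Fin n}, x ∈ A₁ → a ≠ x := by
    intro Q hQ hne a ha x hx h
    exact hne (σ.eq_of_mem_parts hQ hA₁mem (h ▸ ha) hx)
  have hneb : ∀ {Q : Finset (Fin n)}, Q ∈ σ.parts → Q ≠ A₂ →
      ∀ {a : Fin n}, a ∈ Q → ∀ {x : Fin n}, x ∈ A₂ → a ≠ x := by
    intro Q hQ hne a ha x hx h
    exact hne (σ.eq_of_mem_parts hQ hA₂mem (h ▸ ha) hx)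
  -- non-crossing of the merged partition
  have hNC : IsNC σ' := by
    intro i j k l hij hjk hkl hik hjl
    have hik0 : i < k := lt_trans hij hjk
    obtain ⟨P, hP, hiP, hkP⟩ := hik
    obtain ⟨Q, hQ, hjQ, hlQ⟩ := hjl
    rw [mem_mergeFP] at hP hQ
    rcases hP with hPA | ⟨hPold, hPA₁, hPA₂⟩
    · rcases hQ with hQA | ⟨hQold, hQA₁, hQA₂⟩
      · -- both pairs in the merged block
        exact ⟨A₁ ∪ A₂, hAmem, hPA ▸ hiP, hQA ▸ hjQ⟩
      · -- i,k ∈ A, j,l ∈ Q old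
        exfalso
        subst hPA
        rcases Finset.mem_union.1 hiP with hiA1 | hiA2 <;>
          rcases Finset.mem_union.1 hkP with hkA1 | hkA2
        · exact hQA₁ (nc_cross hσ hA₁mem hQold hij hjk hkl hiA1 hkA1 hjQ hlQ).symm
        · -- i ∈ A₁, k ∈ A₂
          have hi1 := hb1 i hiA1
          have hk2 : w₂.val + 1 ≤ k.val := by
            rcases hb2 k hkA2 with h | h
            · rw [Fin.lt_def] at hik0; omega
            · exact h
          by_cases hj2 : ν < j ∧ j ≤ w₂
          · obtain ⟨-, hlw⟩ := rel_mem_of hRelW hνw₂ hQold hjQ hlQ hj2.1 hj2.2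
            rw [Fin.le_def] at hlw
            rw [Fin.lt_def] at hkl
            omega
          · have hjν : ν < j := by
              rw [Fin.lt_def] at hij ⊢; omega
            have hjw : ¬ j ≤ w₂ := fun h => hj2 ⟨hjν, h⟩
            rw [Fin.le_def, not_le] at hjw
            have hjne : j ≠ w₂s := hneb hQold hQA₂ hjQ hw₂sA₂
            have hj3 : w₂s < j := by
              rw [Fin.lt_def, hw₂s]
              rcases Nat.lt_or_ge (w₂.val + 1) j.val with h | h
              · exact h
              · exact absurd (Fin.ext (by rw [hw₂s]; omega) : j = w₂s) hjne
            exact hQA₂ (nc_cross hσ hA₂mem hQold hj3 hjk hkl hw₂sA₂ hkA2 hjQ hlQ).symm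
        · -- i ∈ A₂, k ∈ A₁
          have hk1 := hb1 k hkA1
          have hi2 : i.val ≤ w₁.val := by
            rcases hb2 i hiA2 with h | h
            · exact h
            · rw [Fin.lt_def] at hik0
              rw [Fin.lt_def] at hij hjk
              omega
          by_cases hj2 : ν < j
          · have hjw₂ : j ≤ w₂ := by
              rw [Fin.le_def]; rw [Fin.lt_def] at hjk; omega
            obtain ⟨-, hlw⟩ := rel_mem_of hRelW hνw₂ hQold hjQ hlQ hj2 hjw₂
            have hjne : j ≠ νs := hnea hQold hQA₁ hjQ hνsA₁
            have hj3 : νs < j := by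
              rw [Fin.lt_def, hνs]
              rw [Fin.lt_def] at hj2
              rcases Nat.lt_or_ge (ν.val + 1) j.val with h | h
              · exact h
              · exact absurd (Fin.ext (by rw [hνs]; omega) : j = νs) hjne
            exact hQA₁ (nc_cross hσ hA₁mem hQold hj3 hjk hkl hνsA₁ hkA1 hjQ hlQ).symm
          · rw [not_lt, Fin.le_def] at hj2
            by_cases hl2 : l ≤ w₂
            · obtain ⟨hjν, -⟩ := rel_mem_of hRelW hνw₂ hQold hlQ hjQ
                (by rw [Fin.lt_def]; rw [Fin.lt_def] at hjk hkl; omega) hl2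
              rw [Fin.lt_def] at hjν; omega
            · rw [not_le, Fin.lt_def] at hl2
              have hlne : l ≠ w₂s := hneb hQold hQA₂ hlQ hw₂sA₂
              have hl3 : w₂s < l := by
                rw [Fin.lt_def, hw₂s]
                rcases Nat.lt_or_ge (w₂.val + 1) l.val with h | h
                · exact h
                · exact absurd (Fin.ext (by rw [hw₂s]; omega) : l = w₂s) hlne
              have hjlt : j < w₂s := by rw [Fin.lt_def, hw₂s]; omega
              exact hQA₂ (nc_cross hσ hA₂mem hQold hij hjlt hl3 hiA2 hw₂sA₂ hjQ hlQ).symm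
        · exact hQA₂ (nc_cross hσ hA₂mem hQold hij hjk hkl hiA2 hkA2 hjQ hlQ).symm
    · rcases hQ with hQA | ⟨hQold, hQA₁, hQA₂⟩
      · -- i,k ∈ P old, j,l ∈ A
        subst hQA
        rcases Finset.mem_union.1 hjQ with hjA1 | hjA2 <;>
          rcases Finset.mem_union.1 hlQ with hlA1 | hlA2
        · exact absurd (nc_cross hσ hPold hA₁mem hij hjk hkl hiP hkP hjA1 hlA1) hPA₁
        · -- j ∈ A₁, l ∈ A₂
          exfalso
          have hj1 := hb1 j hjA1
          have hl2 : w₂.val + 1 ≤ l.val := by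
            rcases hb2 l hlA2 with h | h
            · rw [Fin.lt_def] at hjk hkl; omega
            · exact h
          by_cases hk2 : k ≤ w₂
          · obtain ⟨hiν, -⟩ := rel_mem_of hRelW hνw₂ hPold hkP hiP
              (by rw [Fin.lt_def]; rw [Fin.lt_def] at hjk; omega) hk2
            have hine : i ≠ νs := hnea hPold hPA₁ hiP hνsA₁
            have hi3 : νs < i := by
              rw [Fin.lt_def, hνs]
              rw [Fin.lt_def] at hiν
              rcases Nat.lt_or_ge (ν.val + 1) i.val with h | h
              · exact h
              · exact absurd (Fin.ext (by rw [hνs]; omega) : i = νs) hine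
            exact hPA₁ (nc_cross hσ hA₁mem hPold hi3 hij hjk hνsA₁ hjA1 hiP hkP).symm
          · rw [not_le, Fin.lt_def] at hk2
            have hkne : k ≠ w₂s := hneb hPold hPA₂ hkP hw₂sA₂
            have hk3 : w₂s < k := by
              rw [Fin.lt_def, hw₂s]
              rcases Nat.lt_or_ge (w₂.val + 1) k.val with h | h
              · exact h
              · exact absurd (Fin.ext (by rw [hw₂s]; omega) : k = w₂s) hkne
            have hi3 : i < w₂s := by
              rw [Fin.lt_def, hw₂s]
              rw [Fin.lt_def] at hij hjk
              omega
            exact hPA₂ (nc_cross hσ hPold hA₂mem hi3 hk3 hkl hiP hkP hw₂sA₂ hlA2)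
        · -- j ∈ A₂, l ∈ A₁
          exfalso
          have hl1 := hb1 l hlA1
          have hj2 : j.val ≤ w₁.val := by
            rcases hb2 j hjA2 with h | h
            · exact h
            · rw [Fin.lt_def] at hjk hkl; omega
          have hk3 : k < w₂s := by
            rw [Fin.lt_def, hw₂s]
            rw [Fin.lt_def] at hkl
            omega
          exact hPA₂ (nc_cross hσ hPold hA₂mem hij hjk hk3 hiP hkP hjA2 hw₂sA₂)
        · exact absurd (nc_cross hσ hPold hA₂mem hij hjk hkl hiP hkP hjA2 hlA2) hPA₂
      · -- both old
        have hPQ := nc_cross hσ hPold hQold hij hjk hkl hiP hkP hjQ hlQ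
        exact ⟨P, mem_mergeFP.2 (Or.inr ⟨hPold, hPA₁, hPA₂⟩), hiP, by rw [hPQ]; exact hjQ⟩
  -- the new permutations
  set s : Equiv.Perm (Fin n) := Equiv.swap μ w₁ with hsdef
  set sp' := sp * s with hsp'def
  have hμw₁ : μ ≠ w₁ := hw₁μ.ne'
  have hsp'app : ∀ x, x ≠ μ → x ≠ w₁ → sp' x = sp x := by
    intro x h1 h2
    show sp (s x) = sp x
    rw [hsdef, Equiv.swap_apply_of_ne_of_ne h1 h2]
  have hsp'μ : sp' μ = w₂s := by
    show sp (s μ) = _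
    rw [hsdef, Equiv.swap_apply_left, hspw₁]
  have hsp'w₁ : sp' w₁ = νs := by
    show sp (s w₁) = _
    rw [hsdef, Equiv.swap_apply_right, hspμ]
  have hvνs : νs.val = ν.val + 1 := hνs
  have hvw₂s : w₂s.val = w₂.val + 1 := hw₂s
  -- IsAssocPerm σ' sp'
  have hAP : IsAssocPerm σ' sp' := by
    intro B' hB' b hb
    rw [mem_mergeFP] at hB'
    rcases hB' with hB'A | ⟨hBold, hBA₁, hBA₂⟩
    · subst hB'A
      by_cases hbμ : b = μ
      · subst hbμ
        rw [hsp'μ]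
        refine ⟨Finset.mem_union_right _ hw₂sA₂, Or.inl ⟨by rw [Fin.lt_def]; omega, ?_⟩⟩
        intro x hx hbx
        rcases Finset.mem_union.1 hx with hx1 | hx2
        · exact absurd (Fin.le_def.1 (hA₁mm.1.2 x hx1)) (by rw [Fin.lt_def] at hbx; omega)
        · rcases hb2 x hx2 with h | h
          · exfalso; rw [Fin.lt_def] at hbx; omega
          · rw [Fin.le_def]; omega
      · by_cases hbw₁ : b = w₁
        · subst hbw₁
          rw [hsp'w₁]
          refine ⟨Finset.mem_union_left _ hνsA₁, Or.inl ⟨by rw [Fin.lt_def]; omega, ?_⟩⟩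
          intro x hx hbx
          rcases Finset.mem_union.1 hx with hx1 | hx2
          · exact hA₁mm.2.2 x hx1
          · rcases hb2 x hx2 with h | h
            · exfalso; rw [Fin.lt_def] at hbx; omega
            · rw [Fin.le_def]; omega
        · rw [hsp'app b hbμ hbw₁]
          rcases Finset.mem_union.1 hb with hb1m | hb2m
          · obtain ⟨hmem, hdisj⟩ := hsp A₁ hA₁mem b hb1m
            have hfirst : b < sp b ∧ ∀ x ∈ A₁, b < x → sp b ≤ x := by
              rcases hdisj with h | ⟨hmax, -⟩
              · exact h
              · exact absurd (isMaxOf_unique hmax hA₁mm.1) hbμ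
            refine ⟨Finset.mem_union_left _ hmem, Or.inl ⟨hfirst.1, ?_⟩⟩
            intro x hx hbx
            rcases Finset.mem_union.1 hx with hx1 | hx2
            · exact hfirst.2 x hx1 hbx
            · rcases hb2 x hx2 with h | h
              · exfalso
                have := hb1 b hb1m
                rw [Fin.lt_def] at hbx
                omega
              · have h1 : (sp b).val ≤ μ.val := Fin.le_def.1 (hA₁mm.1.2 (sp b) hmem)
                rw [Fin.le_def]; omega
          · obtain ⟨hmem, hdisj⟩ := hsp A₂ hA₂mem b hb2m
            rcases hdisj with ⟨hlt, hmin⟩ | ⟨hmax, hminA⟩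
            · refine ⟨Finset.mem_union_right _ hmem, Or.inl ⟨hlt, ?_⟩⟩
              intro x hx hbx
              rcases Finset.mem_union.1 hx with hx1 | hx2
              · rcases hb2 b hb2m with hbb | hbb
                · have hbw : b < w₁ := by
                    rw [Fin.lt_def]
                    rcases Nat.lt_or_ge b.val w₁.val with h | h
                    · exact h
                    · exact absurd (Fin.ext (by omega) : b = w₁) hbw₁
                  have h1 : sp b ≤ w₁ := hmin w₁ hw₁A₂ hbw
                  have h2 := hb1 x hx1
                  rw [Fin.le_def] at h1 ⊢
                  omega
                · exfalso
                  have h2 := hb1 x hx1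
                  rw [Fin.lt_def] at hbx
                  omega
              · exact hmin x hx2 hbx
            · refine ⟨Finset.mem_union_right _ hmem, Or.inr ⟨⟨Finset.mem_union_right _ hb2m, ?_⟩,
                ⟨Finset.mem_union_right _ hmem, ?_⟩⟩⟩
              · intro x hx
                rcases Finset.mem_union.1 hx with hx1 | hx2
                · have h1 := hb1 x hx1
                  have h2 : w₂s ≤ b := hmax.2 w₂s hw₂sA₂
                  rw [Fin.le_def] at h2 ⊢
                  omega
                · exact hmax.2 x hx2
              · intro x hx
                rcases Finset.mem_union.1 hx with hx1 | hx2
                · have h1 := hb1 x hx1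
                  have h2 : sp b ≤ w₁ := hminA.2 w₁ hw₁A₂
                  rw [Fin.le_def] at h2 ⊢
                  omega
                · exact hminA.2 x hx2
    · have hbμ : b ≠ μ := hnea hBold hBA₁ hb hμA₁
      have hbw₁ : b ≠ w₁ := hneb hBold hBA₂ hb hw₁A₂
      rw [hsp'app b hbμ hbw₁]
      exact hsp B' hBold b hb
  -- the split partition
  set W₁ := W.filter (fun w => w < μ) with hW₁def
  set W₂ := W.filter (fun w => μ ≤ w) with hW₂def
  have hW₁ne : W₁.Nonempty := ⟨w₁, Finset.mem_filter.2 ⟨hw₁W, hw₁μ⟩⟩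
  have hW₂ne : W₂.Nonempty := ⟨μ, Finset.mem_filter.2 ⟨hμW, le_rfl⟩⟩
  have hunionW : W₁ ∪ W₂ = W := by
    ext x
    simp only [hW₁def, hW₂def, Finset.mem_union, Finset.mem_filter]
    constructor
    · rintro (⟨h, -⟩ | ⟨h, -⟩) <;> exact h
    · intro h
      rcases lt_or_ge x μ with h' | h'
      · exact Or.inl ⟨h, h'⟩
      · exact Or.inr ⟨h, h'⟩
  have hdisjW : Disjoint W₁ W₂ := by
    rw [Finset.disjoint_left]
    intro x hx1 hx2
    rw [hW₁def, Finset.mem_filter] at hx1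
    rw [hW₂def, Finset.mem_filter] at hx2
    exact absurd hx2.2 (not_le.2 hx1.2)
  set κσ' := splitFP κσ W W₁ W₂ hW hunionW hdisjW hW₁ne hW₂ne with hκσ'def
  set kσp' := sp'⁻¹ * finRotate n with hkσp'def
  have hkσp'app : ∀ x, kσp' x = s (kσp x) := by
    intro x
    have h1 : kσp' x = s⁻¹ (sp⁻¹ (finRotate n x)) := by
      rw [hkσp'def, hsp'def, mul_inv_rev]
      rfl
    rw [h1, hsdef, Equiv.swap_inv, hcomp]
    rfl
  have hWstep : ∀ b ∈ W, b ≠ w₂ → kσp b ∈ W ∧ b < kσp b ∧ ∀ x ∈ W, b < x → kσp b ≤ x := by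
    intro b hbW hbne
    rcases (hκσp W hW b hbW).2 with ⟨h1, h2⟩ | ⟨h1, -⟩
    · exact ⟨(hκσp W hW b hbW).1, h1, h2⟩
    · exact absurd (isMaxOf_unique h1 ⟨hw₂W, fun y hy => W.le_max' y hy⟩) hbne
  have hw₁leW : ∀ x ∈ W, w₁ ≤ x := fun x hx => W.min'_le x hx
  have hAPk : IsAssocPerm κσ' kσp' := by
    intro C hC b hb
    rw [mem_splitFP] at hC
    rcases hC with hC | hC | ⟨hCold, hCW⟩
    · subst hC
      obtain ⟨hbW, hbμ⟩ := Finset.mem_filter.1 hb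
      by_cases hbν : b = ν
      · subst hbν
        have happ : kσp' ν = w₁ := by
          rw [hkσp'app, hkν, hsdef, Equiv.swap_apply_left]
        rw [happ]
        refine ⟨Finset.mem_filter.2 ⟨hw₁W, hw₁μ⟩, Or.inr ⟨⟨hb, ?_⟩,
          ⟨Finset.mem_filter.2 ⟨hw₁W, hw₁μ⟩, ?_⟩⟩⟩
        · intro x hx
          obtain ⟨hxW, hxμ⟩ := Finset.mem_filter.1 hx
          exact hνmax x hxW hxμ
        · intro x hx
          exact hw₁leW x (Finset.mem_filter.1 hx).1
      · have hbν' : b < ν := lt_of_le_of_ne (hνmax b hbW hbμ) hbν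
        have hbw₂ : b ≠ w₂ := by
          intro h
          rw [h] at hbμ
          rw [Fin.lt_def] at hbμ
          omega
        obtain ⟨hs1, hs2, hs3⟩ := hWstep b hbW hbw₂
        have hkν' : kσp b ≤ ν := hs3 ν hνW hbν'
        have hkμ : kσp b < μ := lt_of_le_of_lt hkν' hνμ
        have happ : kσp' b = kσp b := by
          rw [hkσp'app, hsdef, Equiv.swap_apply_of_ne_of_ne]
          · exact (hkμ.ne)
          · intro h
            have := hw₁leW b hbW
            rw [h] at hs2
            exact absurd this (not_le.2 hs2)
        rw [happ]
        refine ⟨Finset.mem_filter.2 ⟨hs1, hkμ⟩, Or.inl ⟨hs2, ?_⟩⟩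
        intro x hx hbx
        exact hs3 x (Finset.mem_filter.1 hx).1 hbx
    · subst hC
      obtain ⟨hbW, hbμ⟩ := Finset.mem_filter.1 hb
      by_cases hbw₂ : b = w₂
      · subst hbw₂
        have happ : kσp' w₂ = μ := by
          rw [hkσp'app, hkw₂, hsdef, Equiv.swap_apply_right]
        rw [happ]
        refine ⟨Finset.mem_filter.2 ⟨hμW, le_rfl⟩, Or.inr ⟨⟨hb, ?_⟩,
          ⟨Finset.mem_filter.2 ⟨hμW, le_rfl⟩, ?_⟩⟩⟩
        · intro x hx
          exact W.le_max' x (Finset.mem_filter.1 hx).1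
        · intro x hx
          exact (Finset.mem_filter.1 hx).2
      · obtain ⟨hs1, hs2, hs3⟩ := hWstep b hbW hbw₂
        have happ : kσp' b = kσp b := by
          rw [hkσp'app, hsdef, Equiv.swap_apply_of_ne_of_ne]
          · intro h
            rw [h] at hs2
            exact absurd hbμ (not_le.2 hs2)
          · intro h
            have h2 : w₁ < μ := hw₁μ
            rw [h] at hs2
            have := le_trans hbμ (le_of_lt hs2)
            exact absurd (lt_of_le_of_lt this h2) (lt_irrefl _)
        rw [happ]
        refine ⟨Finset.mem_filter.2 ⟨hs1, le_trans hbμ (le_of_lt hs2)⟩, Or.inl ⟨hs2, ?_⟩⟩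
        intro x hx hbx
        exact hs3 x (Finset.mem_filter.1 hx).1 hbx
    · have hdisjDW : ∀ x ∈ C, x ∉ W := by
        intro x hx
        exact Finset.disjoint_left.1 (κσ.disjoint hCold hW hCW) hx
      obtain ⟨hmem, hdisj⟩ := hκσp C hCold b hb
      have happ : kσp' b = kσp b := by
        rw [hkσp'app, hsdef, Equiv.swap_apply_of_ne_of_ne]
        · intro h
          exact hdisjDW (kσp b) hmem (h ▸ hμW)
        · intro h
          exact hdisjDW (kσp b) hmem (h ▸ hw₁W)
      rw [happ]
      exact ⟨hmem, hdisj⟩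
  -- Refines τ κσ'
  have href' : Refines τ κσ' := by
    intro T' hT'
    obtain ⟨D, hD, hTD⟩ := href T' hT'
    by_cases hDW : D = W
    · rw [hDW] at hTD
      by_cases hall : ∀ t ∈ T', μ ≤ t
      · exact ⟨W₂, mem_splitFP.2 (Or.inr (Or.inl rfl)),
          fun t ht => Finset.mem_filter.2 ⟨hTD ht, hall t ht⟩⟩
      · push_neg at hall
        obtain ⟨t, htT, htμ⟩ := hall
        refine ⟨W₁, mem_splitFP.2 (Or.inl rfl), fun t' ht' => Finset.mem_filter.2 ⟨hTD ht', ?_⟩⟩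
        by_contra hc
        push_neg at hc
        have hT'ne : T' ≠ blk τ w₂ := by
          intro h
          exact absurd (hμmin t (h ▸ htT)) (not_le.2 htμ)
        have ht'w₂ : t' ≤ w₂ := W.le_max' t' (hTD ht')
        have ht'μ : μ < t' := by
          rcases lt_or_eq_of_le hc with h | h
          · exact h
          · exact absurd (τ.eq_of_mem_parts hT' (blk_mem τ w₂) (h ▸ ht') hμT).symm
              (Ne.symm hT'ne)
        have ht'w₂' : t' < w₂ := by
          rcases lt_or_eq_of_le ht'w₂ with h | h
          · exact h
          · exact absurd (τ.eq_of_mem_parts hT' (blk_mem τ w₂) (h ▸ ht') (mem_blk τ w₂)).symm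
              (Ne.symm hT'ne)
        exact hT'ne (nc_cross hτ hT' (blk_mem τ w₂) htμ ht'μ ht'w₂' htT ht' hμT (mem_blk τ w₂))
    · exact ⟨D, mem_splitFP.2 (Or.inr (Or.inr ⟨hD, hDW⟩)), hTD⟩
  -- boundary is preserved
  have hbdry' : ∃ m : Fin n, IsMaxOf m (blk σ' z0) ∧ IsMinOf m (blk τ zl) := by
    obtain ⟨m, hm1, hm2⟩ := hbdry
    refine ⟨m, ?_, hm2⟩
    by_cases hz2 : blk σ z0 = A₂
    · have hblk' : blk σ' z0 = A₁ ∪ A₂ :=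
        blk_eq_of_mem hAmem (Finset.mem_union_right _ (hz2 ▸ mem_blk σ z0))
      rw [hblk']
      have hmA₂ : IsMaxOf m A₂ := hz2 ▸ hm1
      have hw₂sm : w₂s ≤ m := hmA₂.2 w₂s hw₂sA₂
      refine ⟨Finset.mem_union_right _ hmA₂.1, ?_⟩
      intro x hx
      rcases Finset.mem_union.1 hx with hx1 | hx2
      · have := hb1 x hx1
        rw [Fin.le_def] at hw₂sm ⊢
        omega
      · exact hmA₂.2 x hx2
    · have hz1 : blk σ z0 ≠ A₁ := by
        intro h
        have := hb1 z0 (h ▸ mem_blk σ z0)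
        omega
      have hmem : blk σ z0 ∈ σ'.parts := mem_mergeFP.2 (Or.inr ⟨blk_mem σ z0, hz1, hz2⟩)
      have hblk' : blk σ' z0 = blk σ z0 := blk_eq_of_mem hmem (mem_blk σ z0)
      rw [hblk']
      exact hm1
  -- Ll σ σ'
  have hll : Ll σ σ' := by
    constructor
    · intro B hB
      by_cases h1 : B = A₁
      · exact ⟨A₁ ∪ A₂, hAmem, h1 ▸ Finset.subset_union_left⟩
      · by_cases h2 : B = A₂
        · exact ⟨A₁ ∪ A₂, hAmem, h2 ▸ Finset.subset_union_right⟩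
        · exact ⟨B, mem_mergeFP.2 (Or.inr ⟨hB, h1, h2⟩), subset_rfl⟩
    · intro C hC
      rw [mem_mergeFP] at hC
      rcases hC with hCA | ⟨hCold, -, -⟩
      · subst hCA
        have hne2 : A₂.Nonempty := ⟨w₁, hw₁A₂⟩
        refine ⟨A₂, hA₂mem, A₂.min' hne2, A₂.max' hne2, ⟨?_, ?_⟩, ⟨?_, ?_⟩,
          A₂.min'_mem hne2, A₂.max'_mem hne2⟩
        · exact Finset.mem_union_right _ (A₂.min'_mem hne2)
        · intro x hx
          rcases Finset.mem_union.1 hx with hx1 | hx2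
          · have h1 := hb1 x hx1
            have h2 : (A₂.min' hne2).val ≤ w₁.val := Fin.le_def.1 (A₂.min'_le w₁ hw₁A₂)
            rw [Fin.le_def]
            omega
          · exact A₂.min'_le x hx2
        · exact Finset.mem_union_right _ (A₂.max'_mem hne2)
        · intro x hx
          rcases Finset.mem_union.1 hx with hx1 | hx2
          · have h1 := hb1 x hx1
            have h2 : w₂s.val ≤ (A₂.max' hne2).val := Fin.le_def.1 (A₂.le_max' w₂s hw₂sA₂)
            rw [Fin.le_def]
            omega
          · exact A₂.le_max' x hx2
      · have hne2 : C.Nonempty := σ.nonempty_of_mem_parts hCold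
        exact ⟨C, hCold, C.min' hne2, C.max' hne2,
          ⟨C.min'_mem hne2, fun y hy => C.min'_le y hy⟩,
          ⟨C.max'_mem hne2, fun y hy => C.le_max' y hy⟩,
          C.min'_mem hne2, C.max'_mem hne2⟩
  -- cardinality
  have hcard : σ'.parts.card + 1 = σ.parts.card := by
    have hAnotin : A₁ ∪ A₂ ∉ (σ.parts.erase A₁).erase A₂ := by
      intro h
      have h2 : A₁ ∪ A₂ ∈ σ.parts := Finset.mem_of_mem_erase (Finset.mem_of_mem_erase h)
      have h3 : A₁ ∪ A₂ = A₁ :=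
        σ.eq_of_mem_parts h2 hA₁mem (Finset.mem_union_left _ hμA₁) hμA₁
      have h4 : w₂s ∈ A₁ := h3 ▸ Finset.mem_union_right _ hw₂sA₂
      have := hb1 w₂s h4
      omega
    have hA₂in : A₂ ∈ σ.parts.erase A₁ := Finset.mem_erase.2 ⟨fun h => hA₁₂ h.symm, hA₂mem⟩
    have e1 : σ'.parts.card = ((σ.parts.erase A₁).erase A₂).card + 1 := by
      show (insert (A₁ ∪ A₂) ((σ.parts.erase A₁).erase A₂)).card = _
      exact Finset.card_insert_of_notMem hAnotin
    have e2 : ((σ.parts.erase A₁).erase A₂).card = (σ.parts.erase A₁).card - 1 :=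
      Finset.card_erase_of_mem hA₂in
    have e3 : (σ.parts.erase A₁).card = σ.parts.card - 1 :=
      Finset.card_erase_of_mem hA₁mem
    have e4 : 0 < (σ.parts.erase A₁).card := Finset.card_pos.2 ⟨A₂, hA₂in⟩
    have e5 : 0 < σ.parts.card := Finset.card_pos.2 ⟨A₁, hA₁mem⟩
    omega
  exact ⟨σ', κσ', sp', kσp', hNC, hAP, hAPk, hkσp'def, href', hbdry', hll, hcard⟩

end PartE2
section PartF
variable {n : ℕ}

lemma existence (hn : 0 < n) (τ : FP n) (hτ : IsNC τ) :
    ∀ k : ℕ, ∀ (σ κσ : FP n) (sp kσp : Equiv.Perm (Fin n)),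
      σ.parts.card ≤ k → IsNC σ → IsAssocPerm σ sp → IsAssocPerm κσ kσp →
      kσp = sp⁻¹ * finRotate n → Refines τ κσ →
      (∃ m : Fin n, IsMaxOf m (blk σ ⟨0, hn⟩) ∧ IsMinOf m (blk τ ⟨n-1, Nat.sub_lt (by omega) Nat.one_pos⟩)) →
      ∃ π κ : FP n, IsNC π ∧ IsKrewerasPair π κ ∧ Ll σ π ∧ Ll τ κ := by
  intro k
  induction k with
  | zero =>
    intro σ κσ sp kσp hcard _ _ _ _ _ _
    exfalso
    have : blk σ ⟨0, hn⟩ ∈ σ.parts := blk_mem σ _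
    have := Finset.card_pos.2 ⟨_, this⟩
    omega
  | succ k ih =>
    intro σ κσ sp kσp hcard hσ hsp hκσp hcomp href hbdry
    by_cases hviol : ∀ W ∈ κσ.parts, ∃ T ∈ τ.parts, ∃ x y : Fin n,
        IsMinOf x W ∧ IsMaxOf y W ∧ x ∈ T ∧ y ∈ T
    · refine ⟨σ, κσ, hσ, ⟨sp, kσp, hsp, hκσp, hcomp⟩, ll_refl σ, href, ?_⟩
      intro C hC
      obtain ⟨T, hT, x, y, h1, h2, h3, h4⟩ := hviol C hC
      exact ⟨T, hT, x, y, h1, h2, h3, h4⟩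
    · push_neg at hviol
      obtain ⟨W, hW, hWv⟩ := hviol
      obtain ⟨σ', κσ', sp', kσp', hσ', hsp', hκσp', hcomp', href', hbdry', hll, hcard'⟩ :=
        merge_step hn hσ hτ hsp hκσp hcomp href hbdry hW (by
          intro T hT x y h
          exact hWv T hT x y h.1 h.2.1 h.2.2.1 h.2.2.2)
      obtain ⟨π, κ, h1, h2, h3, h4⟩ :=
        ih σ' κσ' sp' kσp' (by omega) hσ' hsp' hκσp' hcomp' href' hbdry'
      exact ⟨π, κ, h1, h2, ll_trans hll h3, h4⟩

end PartF

/-- Corollary 6.11: for `σ, τ ∈ NC(n)`: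
(1) there exists `π ∈ NC(n)` with `σ ≪ π` and `τ ≪ K(π)` iff `τ ≤ K(σ)` and
`P_σ⁻¹(1) = P_τ(n)`; moreover such a `π` is unique when it exists. -/
theorem statement18 (n : ℕ) (hn : 0 < n) (σ τ : FP n) (hσ : IsNC σ) (hτ : IsNC τ)
    (κσ : FP n) (hκσ : IsKrewerasPair σ κσ)
    (σp τp : Equiv.Perm (Fin n)) (hσp : IsAssocPerm σ σp) (hτp : IsAssocPerm τ τp) :
    ((∃ π κ : FP n, IsNC π ∧ IsKrewerasPair π κ ∧ Ll σ π ∧ Ll τ κ) ↔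
      (Refines τ κσ ∧ σp⁻¹ ⟨0, hn⟩ = τp ⟨n-1, by omega⟩)) ∧
    (∀ π₁ κ₁ π₂ κ₂ : FP n, IsNC π₁ → IsKrewerasPair π₁ κ₁ → Ll σ π₁ → Ll τ κ₁ →
      IsNC π₂ → IsKrewerasPair π₂ κ₂ → Ll σ π₂ → Ll τ κ₂ → π₁ = π₂) := by
  obtain ⟨σp', κσp', hσp', hκσp', hσcomp⟩ := hκσ
  have hσpe : σp' = σp := ap_unique hσp' hσp
  rw [hσpe] at hσcomp
  constructor
  · constructor
    · rintro ⟨π, κ, hπ, hκpair, hllσ, hllτ⟩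
      obtain ⟨pp, kp, hpp, hkp, hcomp⟩ := hκpair
      exact ⟨forward_refines hσ hπ hσp hκσp' hσcomp hpp hkp hcomp hllσ hllτ,
        forward_perm hn hσp hτp hpp hkp hcomp hllσ hllτ⟩
    · rintro ⟨href, hperm⟩
      have hbdry : ∃ m : Fin n, IsMaxOf m (blk σ ⟨0, hn⟩) ∧
          IsMinOf m (blk τ ⟨n-1, by omega⟩) := by
        refine ⟨σp⁻¹ ⟨0, hn⟩, ap_inv_zero hσp hn, ?_⟩
        rw [hperm]
        exact ap_last hτp hn
      exact existence hn τ hτ σ.parts.card σ κσ σp κσp' le_rfl hσ hσp hκσp' hσcomp href hbdry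
  · intro π₁ κ₁ π₂ κ₂ h1 h2 h3 h4 h5 h6 h7 h8
    exact uniqueness hσ hσp hκσp' hσcomp π₁ κ₁ π₂ κ₂ h1 h2 h3 h4 h5 h6 h7 h8
end BBP
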